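/- arXiv:1607.08376 — 4 statements merged into one kernel-verified Lean document; each statement's English description precedes it below -/
import Mathlib

section
/- Let F(ξ) = Σ_{j=0}^N F_j ξ^j with F_j ∈ ℂ^{2M×2M}. F satisfies the QMF condition I − F(ξ)*F(ξ) = 0 on the unit circle if and only if for all ξ, η in the open unit disk, I − F(η)*F(ξ) = (1 − ξ η̄) ℓ_N(η)* ℓ_N(ξ), where ℓ_N(ξ) is the block-Hankel map ℓ_N(ξ) = H · (1, ξ, …, ξ^{N−1})^T with H the block matrix whose (i,j) block (1-indexed) is F_{i+j−1} if i+j−1 ≤ N and 0 otherwise. -/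
open Matrix Finset

/-- `F(ξ) = ∑_{j=0}^N F_j ξ^j`. -/
noncomputable def Fpoly (M N : ℕ) (F : ℕ → Matrix (Fin (2*M)) (Fin (2*M)) ℂ) (ξ : ℂ) :
    Matrix (Fin (2*M)) (Fin (2*M)) ℂ :=
  ∑ j ∈ Finset.range (N+1), ξ^j • F j

/-- The block-Hankel map `ℓ_N(ξ)`: its `i`-th block (0-indexed `i : Fin N`) is
`∑_{k=0}^{N-1} ξ^k F_{i+k+1}` with `F_m := 0` for `m > N`. -/
noncomputable def ellN (M N : ℕ) (F : ℕ → Matrix (Fin (2*M)) (Fin (2*M)) ℂ) (ξ : ℂ) :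
    Matrix (Fin N × Fin (2*M)) (Fin (2*M)) ℂ :=
  fun p c => ∑ k ∈ Finset.range N,
    ξ^k * (if p.1.1 + k + 1 ≤ N then F (p.1.1 + k + 1) p.2 c else 0)

lemma sum_shift' {α : Type*} [AddCommMonoid α] (t : ℕ → α) (n : ℕ) :
    (∑ i ∈ Finset.range n, t (i+1)) + t 0 = (∑ i ∈ Finset.range n, t i) + t n := by
  rw [← Finset.sum_range_succ', Finset.sum_range_succ]

lemma Fpoly_conj_mul (M N : ℕ) (F : ℕ → Matrix (Fin (2*M)) (Fin (2*M)) ℂ) (ξ ζ : ℂ) :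
    (Fpoly M N F ξ)ᴴ * Fpoly M N F ζ
      = ∑ q ∈ range (N+1), ∑ p ∈ range (N+1),
          (((starRingEnd ℂ) ξ)^q * ζ^p) • ((F q)ᴴ * F p) := by
  unfold Fpoly
  rw [conjTranspose_sum, Finset.sum_mul_sum]
  refine Finset.sum_congr rfl fun q hq => Finset.sum_congr rfl fun p hp => ?_
  rw [conjTranspose_smul, smul_mul_smul_comm]
  congr 2
  rw [← map_pow, starRingEnd_apply]

noncomputable def Ek (M N : ℕ) (F : ℕ → Matrix (Fin (2*M)) (Fin (2*M)) ℂ) (k : ℕ) :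
    Matrix (Fin N × Fin (2*M)) (Fin (2*M)) ℂ :=
  fun p c => if p.1.1 + k + 1 ≤ N then F (p.1.1 + k + 1) p.2 c else 0

lemma ellN_eq (M N : ℕ) (F : ℕ → Matrix (Fin (2*M)) (Fin (2*M)) ℂ) (ξ : ℂ) :
    ellN M N F ξ = ∑ k ∈ range N, ξ^k • Ek M N F k := by
  ext p c
  simp [ellN, Ek, Matrix.sum_apply, Matrix.smul_apply, smul_eq_mul]

lemma Ek_mul (M N : ℕ) (F : ℕ → Matrix (Fin (2*M)) (Fin (2*M)) ℂ) (l k : ℕ) :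
    (Ek M N F l)ᴴ * Ek M N F k
      = ∑ i ∈ range N, (if l + (i+1) ≤ N ∧ k + (i+1) ≤ N
          then (F (l + (i+1)))ᴴ * F (k + (i+1)) else 0) := by
  ext b c
  rw [mul_apply, Fintype.sum_prod_type, Matrix.sum_apply]
  simp only [apply_ite (fun m : Matrix (Fin (2*M)) (Fin (2*M)) ℂ => m b c), Matrix.zero_apply]
  rw [← Fin.sum_univ_eq_sum_range (fun i => if l+(i+1) ≤ N ∧ k+(i+1) ≤ N
      then ((F (l+(i+1)))ᴴ * F (k+(i+1))) b c else 0) N]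
  refine Finset.sum_congr rfl fun i _ => ?_
  by_cases h1 : i.1 + l + 1 ≤ N
  · by_cases h2 : i.1 + k + 1 ≤ N
    · rw [if_pos ⟨by omega, by omega⟩]
      have e1 : l + (i.1+1) = i.1 + l + 1 := by omega
      have e2 : k + (i.1+1) = i.1 + k + 1 := by omega
      rw [e1, e2]
      simp [mul_apply, conjTranspose_apply, Ek, h1, h2]
    · rw [if_neg (by omega)]
      simp [conjTranspose_apply, Ek, h2]
  · rw [if_neg (by omega)]
    simp [conjTranspose_apply, Ek, h1]

lemma ell_conj_mul (M N : ℕ) (F : ℕ → Matrix (Fin (2*M)) (Fin (2*M)) ℂ) (ξ η : ℂ) :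
    (ellN M N F η)ᴴ * ellN M N F ξ
      = ∑ l ∈ range N, ∑ k ∈ range N, (((starRingEnd ℂ) η)^l * ξ^k) •
          ∑ i ∈ range N, (if l + (i+1) ≤ N ∧ k + (i+1) ≤ N
            then (F (l + (i+1)))ᴴ * F (k + (i+1)) else 0) := by
  rw [ellN_eq, ellN_eq, conjTranspose_sum, Matrix.sum_mul]
  refine Finset.sum_congr rfl fun l _ => ?_
  rw [Matrix.mul_sum]
  refine Finset.sum_congr rfl fun k _ => ?_
  rw [conjTranspose_smul, Matrix.smul_mul, Matrix.mul_smul, smul_smul, Ek_mul]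
  congr 2
  rw [← map_pow, starRingEnd_apply]

lemma coeff_cond (M N : ℕ) (F : ℕ → Matrix (Fin (2*M)) (Fin (2*M)) ℂ)
    (h : ∀ ξ : ℂ, ‖ξ‖ = 1 →
      (1 : Matrix (Fin (2*M)) (Fin (2*M)) ℂ) - (Fpoly M N F ξ)ᴴ * Fpoly M N F ξ = 0) :
    ∀ m : ℕ, (∑ q ∈ range (N+1), if q + m ≤ N then (F q)ᴴ * F (q+m) else 0)
      = if m = 0 then (1 : Matrix (Fin (2*M)) (Fin (2*M)) ℂ) else 0 := by
  intro m
  have key : ∀ ξ : ℂ, ‖ξ‖ = 1 →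
      (1 : Matrix (Fin (2*M)) (Fin (2*M)) ℂ)
        = ∑ q ∈ range (N+1), ∑ p ∈ range (N+1),
            (((starRingEnd ℂ) ξ)^q * ξ^p) • ((F q)ᴴ * F p) := by
    intro ξ hξ
    have h0 := h ξ hξ
    rw [sub_eq_zero] at h0
    rw [h0, Fpoly_conj_mul]
  ext b c
  set P : Polynomial ℂ :=
    Polynomial.C ((1 : Matrix (Fin (2*M)) (Fin (2*M)) ℂ) b c) * Polynomial.X^N
      - ∑ q ∈ range (N+1), ∑ p ∈ range (N+1),
          Polynomial.monomial (N - q + p) (((F q)ᴴ * F p) b c) with hPdef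
  have hroot : ∀ ξ : ℂ, ‖ξ‖ = 1 → P.eval ξ = 0 := by
    intro ξ hξ
    have h1 : ξ * (starRingEnd ℂ) ξ = 1 := by
      rw [Complex.mul_conj]
      norm_cast
      rw [Complex.normSq_eq_norm_sq, hξ]; norm_num
    have h2 : ((starRingEnd ℂ) ξ) * ξ = 1 := by rw [mul_comm]; exact h1
    have hpow : ∀ q p : ℕ, q ≤ N →
        ξ^(N - q + p) = (((starRingEnd ℂ) ξ)^q * ξ^p) * ξ^N := by
      intro q p hq
      have e1 : ξ^N = ξ^(N-q) * ξ^q := by rw [← pow_add]; congr 1; omega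
      have e2 : ((starRingEnd ℂ) ξ)^q * ξ^q = 1 := by rw [← mul_pow, h2, one_pow]
      calc ξ^(N - q + p) = ξ^(N-q) * ξ^p := pow_add ξ _ _
        _ = (((starRingEnd ℂ) ξ)^q * ξ^q) * (ξ^(N-q) * ξ^p) := by rw [e2, one_mul]
        _ = (((starRingEnd ℂ) ξ)^q * ξ^p) * (ξ^(N-q) * ξ^q) := by ring
        _ = (((starRingEnd ℂ) ξ)^q * ξ^p) * ξ^N := by rw [← e1]
    have hk := congrFun (congrFun (key ξ hξ) b) c
    simp only [Matrix.sum_apply, Matrix.smul_apply, smul_eq_mul] at hk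
    simp only [hPdef, Polynomial.eval_sub, Polynomial.eval_mul, Polynomial.eval_pow,
      Polynomial.eval_C, Polynomial.eval_X, Polynomial.eval_finset_sum,
      Polynomial.eval_monomial]
    rw [sub_eq_zero, hk, Finset.sum_mul]
    refine Finset.sum_congr rfl fun q hq => ?_
    rw [Finset.sum_mul]
    refine Finset.sum_congr rfl fun p hp => ?_
    rw [hpow q p (by simpa [Nat.lt_succ_iff] using hq)]
    ring
  have hP0 : P = 0 := by
    apply Polynomial.eq_zero_of_infinite_isRoot
    have hinj : Set.InjOn (fun t : ℝ => Complex.exp (t * Complex.I)) (Set.Ioo 0 1) := by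
      intro a ha b hb hab
      simp only [Complex.exp_eq_exp_iff_exists_int] at hab
      obtain ⟨n, hn⟩ := hab
      have him := congrArg Complex.im hn
      simp [Complex.add_im, Complex.mul_im, Complex.mul_re] at him
      have hπ := Real.pi_gt_three
      have hn0 : n = 0 := by
        rcases lt_trichotomy n 0 with hlt | heq | hgt
        · have hle : (n:ℝ) ≤ -1 := by exact_mod_cast Int.le_sub_one_of_lt hlt
          nlinarith [ha.1, ha.2, hb.1, hb.2]
        · exact heq
        · have hge : (1:ℝ) ≤ (n:ℝ) := by exact_mod_cast hgt
          nlinarith [ha.1, ha.2, hb.1, hb.2]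
      rw [hn0] at him
      simpa using him
    have hsub : (fun t : ℝ => Complex.exp (t * Complex.I)) '' Set.Ioo 0 1
        ⊆ {x | P.IsRoot x} := by
      rintro _ ⟨t, _, rfl⟩
      have hnorm : ‖Complex.exp ((t:ℂ) * Complex.I)‖ = 1 := by
        rw [Complex.norm_exp]
        simp
      exact hroot _ hnorm
    exact Set.Infinite.mono hsub (Set.Infinite.image hinj (Set.Ioo_infinite (by norm_num)))
  have hcoeff : P.coeff (N+m) = 0 := by rw [hP0]; simp
  simp only [hPdef, Polynomial.coeff_sub, Polynomial.coeff_C_mul, Polynomial.coeff_X_pow,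
    Polynomial.finset_sum_coeff, Polynomial.coeff_monomial] at hcoeff
  have inner : ∀ q ∈ range (N+1),
      (∑ p ∈ range (N+1), if N-q+p = N+m then ((F q)ᴴ * F p) b c else 0)
        = (if q+m ≤ N then ((F q)ᴴ * F (q+m)) b c else 0) := by
    intro q hq
    have hqN : q ≤ N := by simpa [Nat.lt_succ_iff] using hq
    rw [Finset.sum_congr rfl (fun p _ =>
      if_congr (show (N-q+p = N+m) ↔ p = q+m by omega) rfl rfl)]
    rw [Finset.sum_ite_eq' (range (N+1)) (q+m) (fun p => ((F q)ᴴ * F p) b c)]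
    simp [Nat.lt_succ_iff]
  rw [Finset.sum_congr rfl inner] at hcoeff
  rw [sub_eq_zero] at hcoeff
  rw [Matrix.sum_apply]
  simp only [apply_ite (fun A : Matrix (Fin (2*M)) (Fin (2*M)) ℂ => A b c),
    Matrix.zero_apply]
  rw [← hcoeff]
  rw [if_congr (show (N + m = N) ↔ m = 0 by omega) rfl rfl]
  by_cases hm : m = 0 <;> simp [hm]

noncomputable def Smat (M N : ℕ) (F : ℕ → Matrix (Fin (2*M)) (Fin (2*M)) ℂ) (l k : ℕ) :
    Matrix (Fin (2*M)) (Fin (2*M)) ℂ :=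
  ∑ i ∈ range N, (if l + (i+1) ≤ N ∧ k + (i+1) ≤ N
    then (F (l + (i+1)))ᴴ * F (k + (i+1)) else 0)

lemma ell_conj_mul' (M N : ℕ) (F : ℕ → Matrix (Fin (2*M)) (Fin (2*M)) ℂ) (ξ η : ℂ) :
    (ellN M N F η)ᴴ * ellN M N F ξ
      = ∑ l ∈ range N, ∑ k ∈ range N, (((starRingEnd ℂ) η)^l * ξ^k) • Smat M N F l k :=
  ell_conj_mul M N F ξ η

lemma Smat_Nk (M N : ℕ) (F : ℕ → Matrix (Fin (2*M)) (Fin (2*M)) ℂ) (k : ℕ) :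
    Smat M N F N k = 0 :=
  Finset.sum_eq_zero fun i _ => if_neg (by omega)

lemma Smat_lN (M N : ℕ) (F : ℕ → Matrix (Fin (2*M)) (Fin (2*M)) ℂ) (l : ℕ) :
    Smat M N F l N = 0 :=
  Finset.sum_eq_zero fun i _ => if_neg (by omega)

lemma Smat_succ (M N : ℕ) (F : ℕ → Matrix (Fin (2*M)) (Fin (2*M)) ℂ) (l k : ℕ)
    (hl : l + 1 ≤ N) (hk : k + 1 ≤ N) :
    Smat M N F (l+1) (k+1) = Smat M N F l k - (F (l+1))ᴴ * F (k+1) := by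
  have key : Smat M N F (l+1) (k+1)
      = ∑ i ∈ range N, (if l + (i+1+1) ≤ N ∧ k + (i+1+1) ≤ N
          then (F (l + (i+1+1)))ᴴ * F (k + (i+1+1)) else 0) := by
    refine Finset.sum_congr rfl fun i _ => ?_
    rcases le_or_gt (l + (i+1+1)) N with h1 | h1
    · rcases le_or_gt (k + (i+1+1)) N with h2 | h2
      · rw [if_pos ⟨by omega, by omega⟩, if_pos ⟨h1, h2⟩]
        have e1 : l+1 + (i+1) = l + (i+1+1) := by omega
        have e2 : k+1 + (i+1) = k + (i+1+1) := by omega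
        rw [e1, e2]
      · rw [if_neg (by omega), if_neg (by omega)]
    · rw [if_neg (by omega), if_neg (by omega)]
  have hshift := sum_shift' (fun j => if l + (j+1) ≤ N ∧ k + (j+1) ≤ N
      then (F (l + (j+1)))ᴴ * F (k + (j+1)) else 0) N
  have hN : (if l + (N+1) ≤ N ∧ k + (N+1) ≤ N
      then (F (l + (N+1)))ᴴ * F (k + (N+1)) else 0) = 0 := if_neg (by omega)
  have h0 : (if l + (0+1) ≤ N ∧ k + (0+1) ≤ N
      then (F (l + (0+1)))ᴴ * F (k + (0+1)) else 0) = (F (l+1))ᴴ * F (k+1) := by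
    rw [if_pos ⟨by omega, by omega⟩]
  rw [hN, h0] at hshift
  rw [key]
  have : Smat M N F l k = ∑ i ∈ range N, (if l + (i+1) ≤ N ∧ k + (i+1) ≤ N
      then (F (l + (i+1)))ᴴ * F (k + (i+1)) else 0) := rfl
  rw [this]
  have := eq_sub_of_add_eq hshift
  rw [this]
  abel

lemma Smat_q0 (M N : ℕ) (F : ℕ → Matrix (Fin (2*M)) (Fin (2*M)) ℂ)
    (hc : ∀ m : ℕ, (∑ q ∈ range (N+1), if q + m ≤ N then (F q)ᴴ * F (q+m) else 0)
      = if m = 0 then (1 : Matrix (Fin (2*M)) (Fin (2*M)) ℂ) else 0)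
    (p : ℕ) (hp : p ≤ N) :
    Smat M N F 0 p = (if p = 0 then (1 : Matrix (Fin (2*M)) (Fin (2*M)) ℂ) else 0)
      - (F 0)ᴴ * F p := by
  have h := hc p
  rw [Finset.sum_range_succ'] at h
  have hmatch : Smat M N F 0 p
      = ∑ j ∈ range N, (if j+1 + p ≤ N then (F (j+1))ᴴ * F (j+1+p) else 0) := by
    refine Finset.sum_congr rfl fun i _ => ?_
    rcases le_or_gt (i+1+p) N with h1 | h1
    · rw [if_pos ⟨by omega, by omega⟩, if_pos h1]
      have e1 : 0 + (i+1) = i+1 := by omega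
      have e2 : p + (i+1) = i+1+p := by omega
      rw [e1, e2]
    · rw [if_neg (by omega), if_neg (by omega)]
  have h0 : (if 0 + p ≤ N then (F 0)ᴴ * F (0+p) else 0) = (F 0)ᴴ * F p := by
    rw [if_pos (by omega), Nat.zero_add]
  rw [h0] at h
  rw [hmatch]
  exact eq_sub_of_add_eq h

lemma Smat_p0 (M N : ℕ) (F : ℕ → Matrix (Fin (2*M)) (Fin (2*M)) ℂ)
    (hc' : ∀ m : ℕ, (∑ q ∈ range (N+1), if q + m ≤ N then (F (q+m))ᴴ * F q else 0)
      = if m = 0 then (1 : Matrix (Fin (2*M)) (Fin (2*M)) ℂ) else 0)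
    (q : ℕ) (hq : q ≤ N) :
    Smat M N F q 0 = (if q = 0 then (1 : Matrix (Fin (2*M)) (Fin (2*M)) ℂ) else 0)
      - (F q)ᴴ * F 0 := by
  have h := hc' q
  rw [Finset.sum_range_succ'] at h
  have hmatch : Smat M N F q 0
      = ∑ j ∈ range N, (if j+1 + q ≤ N then (F (j+1+q))ᴴ * F (j+1) else 0) := by
    refine Finset.sum_congr rfl fun i _ => ?_
    rcases le_or_gt (i+1+q) N with h1 | h1
    · rw [if_pos ⟨by omega, by omega⟩, if_pos h1]
      have e1 : q + (i+1) = i+1+q := by omega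
      have e2 : 0 + (i+1) = i+1 := by omega
      rw [e1, e2]
    · rw [if_neg (by omega), if_neg (by omega)]
  have h0 : (if 0 + q ≤ N then (F (0+q))ᴴ * F 0 else 0) = (F q)ᴴ * F 0 := by
    rw [if_pos (by omega), Nat.zero_add]
  rw [h0] at h
  rw [hmatch]
  exact eq_sub_of_add_eq h

lemma ident_of_coeff (M N : ℕ) (F : ℕ → Matrix (Fin (2*M)) (Fin (2*M)) ℂ)
    (hc : ∀ m : ℕ, (∑ q ∈ range (N+1), if q + m ≤ N then (F q)ᴴ * F (q+m) else 0)
      = if m = 0 then (1 : Matrix (Fin (2*M)) (Fin (2*M)) ℂ) else 0)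
    (ξ η : ℂ) :
    (1 : Matrix (Fin (2*M)) (Fin (2*M)) ℂ) - (Fpoly M N F η)ᴴ * Fpoly M N F ξ
      = (1 - ξ * (starRingEnd ℂ) η) • ((ellN M N F η)ᴴ * ellN M N F ξ) := by
  classical
  have hc' : ∀ m : ℕ, (∑ q ∈ range (N+1), if q + m ≤ N then (F (q+m))ᴴ * F q else 0)
      = if m = 0 then (1 : Matrix (Fin (2*M)) (Fin (2*M)) ℂ) else 0 := by
    intro m
    have h := congrArg conjTranspose (hc m)
    simpa [conjTranspose_sum, apply_ite (conjTranspose), conjTranspose_mul] using h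
  rw [Fpoly_conj_mul, ell_conj_mul']
  have hone : (1 : Matrix (Fin (2*M)) (Fin (2*M)) ℂ)
      = ∑ q ∈ range (N+1), ∑ p ∈ range (N+1), (((starRingEnd ℂ) η)^q * ξ^p) •
          (if q = 0 ∧ p = 0 then (1 : Matrix (Fin (2*M)) (Fin (2*M)) ℂ) else 0) := by
    symm
    simp [smul_ite, ite_and, Finset.sum_ite_eq', Finset.mem_range]
  have hext : (∑ l ∈ range N, ∑ k ∈ range N, (((starRingEnd ℂ) η)^l * ξ^k) • Smat M N F l k)
      = ∑ l ∈ range (N+1), ∑ k ∈ range (N+1),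
          (((starRingEnd ℂ) η)^l * ξ^k) • Smat M N F l k := by
    rw [Finset.sum_range_succ (fun l => ∑ k ∈ range (N+1),
      (((starRingEnd ℂ) η)^l * ξ^k) • Smat M N F l k)]
    have hN : (∑ k ∈ range (N+1), (((starRingEnd ℂ) η)^N * ξ^k) • Smat M N F N k) = 0 :=
      Finset.sum_eq_zero fun k _ => by rw [Smat_Nk, smul_zero]
    rw [hN, add_zero]
    refine Finset.sum_congr rfl fun l _ => ?_
    rw [Finset.sum_range_succ, Smat_lN, smul_zero, add_zero]
  have hshift2 : (∑ q ∈ range (N+1), ∑ p ∈ range (N+1), (((starRingEnd ℂ) η)^q * ξ^p) •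
        (if q = 0 ∨ p = 0 then (0 : Matrix (Fin (2*M)) (Fin (2*M)) ℂ)
          else Smat M N F (q-1) (p-1)))
      = ∑ l ∈ range N, ∑ k ∈ range N,
          (((starRingEnd ℂ) η)^(l+1) * ξ^(k+1)) • Smat M N F l k := by
    rw [Finset.sum_range_succ']
    have h0 : (∑ p ∈ range (N+1), (((starRingEnd ℂ) η)^0 * ξ^p) •
        (if (0:ℕ) = 0 ∨ p = 0 then (0 : Matrix (Fin (2*M)) (Fin (2*M)) ℂ)
          else Smat M N F (0-1) (p-1))) = 0 :=
      Finset.sum_eq_zero fun p _ => by simp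
    rw [h0, add_zero]
    refine Finset.sum_congr rfl fun l _ => ?_
    rw [Finset.sum_range_succ']
    simp
  have hmul : (ξ * (starRingEnd ℂ) η) • (∑ l ∈ range N, ∑ k ∈ range N,
        (((starRingEnd ℂ) η)^l * ξ^k) • Smat M N F l k)
      = ∑ l ∈ range N, ∑ k ∈ range N,
          (((starRingEnd ℂ) η)^(l+1) * ξ^(k+1)) • Smat M N F l k := by
    rw [Finset.smul_sum]
    refine Finset.sum_congr rfl fun l _ => ?_
    rw [Finset.smul_sum]
    refine Finset.sum_congr rfl fun k _ => ?_
    rw [smul_smul]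
    congr 1
    ring
  rw [sub_smul, one_smul, hmul, ← hshift2, hext]
  conv_lhs => rw [hone]
  rw [← Finset.sum_sub_distrib, ← Finset.sum_sub_distrib]
  refine Finset.sum_congr rfl fun q hq => ?_
  rw [← Finset.sum_sub_distrib, ← Finset.sum_sub_distrib]
  refine Finset.sum_congr rfl fun p hp => ?_
  rw [← smul_sub, ← smul_sub]
  congr 1
  have hqN : q ≤ N := by simpa [Nat.lt_succ_iff] using hq
  have hpN : p ≤ N := by simpa [Nat.lt_succ_iff] using hp
  by_cases hq0 : q = 0
  · subst hq0
    rw [if_pos (Or.inl rfl), Smat_q0 M N F hc p hpN]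
    simp [sub_sub]
  · by_cases hp0 : p = 0
    · subst hp0
      rw [if_pos (Or.inr rfl), Smat_p0 M N F hc' q hqN]
      simp [hq0]
    · obtain ⟨q', rfl⟩ := Nat.exists_eq_succ_of_ne_zero hq0
      obtain ⟨p', rfl⟩ := Nat.exists_eq_succ_of_ne_zero hp0
      rw [if_neg (by simp), if_neg (by omega)]
      simp only [Nat.succ_sub_one]
      rw [Smat_succ M N F q' p' hqN hpN]
      abel

theorem stmt1 (M N : ℕ) (F : ℕ → Matrix (Fin (2*M)) (Fin (2*M)) ℂ) :
    (∀ ξ : ℂ, ‖ξ‖ = 1 →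
      (1 : Matrix (Fin (2*M)) (Fin (2*M)) ℂ) - (Fpoly M N F ξ)ᴴ * Fpoly M N F ξ = 0) ↔
    (∀ ξ η : ℂ, ‖ξ‖ < 1 → ‖η‖ < 1 →
      (1 : Matrix (Fin (2*M)) (Fin (2*M)) ℂ) - (Fpoly M N F η)ᴴ * Fpoly M N F ξ =
        (1 - ξ * (starRingEnd ℂ) η) • ((ellN M N F η)ᴴ * ellN M N F ξ)) := by

  constructor
  · intro h ξ η _ _
    exact ident_of_coeff M N F (coeff_cond M N F h) ξ η
  · intro h ξ hξ
    have hz : ξ * (starRingEnd ℂ) ξ = 1 := by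
      rw [Complex.mul_conj]
      norm_cast
      rw [Complex.normSq_eq_norm_sq, hξ]; norm_num
    have hbase : Continuous fun r : ℝ => (r:ℂ)*ξ :=
      Complex.continuous_ofReal.mul continuous_const
    have hF : Continuous fun r : ℝ => Fpoly M N F ((r:ℂ)*ξ) := by
      unfold Fpoly
      apply continuous_finset_sum
      intro j _
      exact (hbase.pow j).smul continuous_const
    have hE : Continuous fun r : ℝ => ellN M N F ((r:ℂ)*ξ) := by
      have hrw : (fun r : ℝ => ellN M N F ((r:ℂ)*ξ))
          = fun r : ℝ => ∑ k ∈ range N, ((r:ℂ)*ξ)^k • Ek M N F k :=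
        funext fun r => ellN_eq M N F _
      rw [hrw]
      apply continuous_finset_sum
      intro k _
      exact (hbase.pow k).smul continuous_const
    have hcont : Continuous (fun r : ℝ =>
        ((1 : Matrix (Fin (2*M)) (Fin (2*M)) ℂ)
          - (Fpoly M N F ((r:ℂ)*ξ))ᴴ * Fpoly M N F ((r:ℂ)*ξ))
          - (1 - ((r:ℂ)*ξ) * (starRingEnd ℂ) ((r:ℂ)*ξ)) •
              ((ellN M N F ((r:ℂ)*ξ))ᴴ * ellN M N F ((r:ℂ)*ξ))) := by
      refine Continuous.sub (Continuous.sub continuous_const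
        (Continuous.matrix_mul hF.matrix_conjTranspose hF)) ?_
      refine Continuous.smul (f := fun r : ℝ => (1 - ((r:ℂ)*ξ) * (starRingEnd ℂ) ((r:ℂ)*ξ))) ?_ (Continuous.matrix_mul hE.matrix_conjTranspose hE)
      exact Continuous.sub continuous_const
        (hbase.mul (Complex.continuous_conj.comp hbase))
    have heq : Set.EqOn (fun r : ℝ =>
        ((1 : Matrix (Fin (2*M)) (Fin (2*M)) ℂ)
          - (Fpoly M N F ((r:ℂ)*ξ))ᴴ * Fpoly M N F ((r:ℂ)*ξ))
          - (1 - ((r:ℂ)*ξ) * (starRingEnd ℂ) ((r:ℂ)*ξ)) •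
              ((ellN M N F ((r:ℂ)*ξ))ᴴ * ellN M N F ((r:ℂ)*ξ)))
        (fun _ => (0 : Matrix (Fin (2*M)) (Fin (2*M)) ℂ)) (Set.Ico (0:ℝ) 1) := by
      intro r hr
      have hlt : ‖(r:ℂ)*ξ‖ < 1 := by
        rw [norm_mul, hξ, mul_one, Complex.norm_real, Real.norm_eq_abs,
          abs_of_nonneg hr.1]
        exact hr.2
      have := h ((r:ℂ)*ξ) ((r:ℂ)*ξ) hlt hlt
      exact sub_eq_zero_of_eq this
    have hcl := heq.closure hcont continuous_const
    have h1 : (1:ℝ) ∈ closure (Set.Ico (0:ℝ) 1) := by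
      rw [closure_Ico (by norm_num : (0:ℝ) ≠ 1)]
      exact ⟨by norm_num, le_refl 1⟩
    have hf1 := hcl h1
    simp only [Complex.ofReal_one, one_mul] at hf1
    rw [hz] at hf1
    simp only [sub_self, zero_smul, sub_zero] at hf1
    exact hf1
end

section
/- Let F_j ∈ ℂ^{2M×2M}, j = 0,…,N, be such that F(ξ) = Σ F_j ξ^j satisfies the QMF condition on the unit circle. Then the block matrix U = (F_0* + F_N*) P^0 + Σ_{j=1}^{N−1} F_{N−j}* P^j, where P is the block cyclic shift on (ℂ^{2M})^N, is unitary. Equivalently, the block-circulant matrix U with first block row (F_0*+F_N*, F_1*, …, F_{N−1}*) satisfies U*U = I. -/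
open Matrix Finset

/-- The block-circulant matrix `U` whose block in position `(i,j)` is `G_{(j-i) mod N}`,
where `G_0 = F_0* + F_N*` and `G_k = F_k*` for `1 ≤ k ≤ N-1`; equivalently
`U = (F_0*+F_N*) P^0 + ∑_{j=1}^{N-1} F_{N-j}* P^j` with `P` the block cyclic shift. -/
noncomputable def Ucirc (M N : ℕ) (F : ℕ → Matrix (Fin (2*M)) (Fin (2*M)) ℂ) :
    Matrix (Fin N × Fin (2*M)) (Fin N × Fin (2*M)) ℂ :=
  fun p q =>
    (if (q.1.1 + N - p.1.1) % N = 0 then (F 0 + F N)ᴴ else (F ((q.1.1 + N - p.1.1) % N))ᴴ)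
      p.2 q.2

namespace Stmt3Aux

/-- summing a `N`-periodic function over a window of length `N` is shift invariant -/
lemma sum_shift {α : Type*} [AddCommGroup α] (N : ℕ) (f : ℕ → α)
    (hf : ∀ k, f (k + N) = f k) (a : ℕ) :
    ∑ l ∈ Finset.range N, f (a + l) = ∑ l ∈ Finset.range N, f l := by
  induction a with
  | zero => simp
  | succ a ih =>
    rw [← ih]
    have h2 := Finset.sum_range_succ' (fun l => f (a + l)) N
    have h3 := Finset.sum_range_succ (fun l => f (a + l)) N
    have h4 : f (a + N) = f a := hf a
    have h5 : ∑ l ∈ Finset.range N, f (a + (l + 1)) = ∑ l ∈ Finset.range N, f (a + l) := by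
      have := h2.symm.trans h3
      simp only [h4] at this
      simpa using this
    calc ∑ l ∈ Finset.range N, f (a + 1 + l)
        = ∑ l ∈ Finset.range N, f (a + (l + 1)) :=
          Finset.sum_congr rfl fun l _ => by congr 1; omega
      _ = ∑ l ∈ Finset.range N, f (a + l) := h5

lemma geom_aux {N : ℕ} (x : ℂ) (hx : x ^ N = 1) :
    ∑ m ∈ Finset.range N, x ^ m = if x = 1 then (N : ℂ) else 0 := by
  split_ifs with h
  · subst h; simp
  · have h2 := geom_sum_mul x N
    rw [hx, sub_self] at h2
    rcases mul_eq_zero.mp h2 with h3 | h3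
    · exact h3
    · exact absurd (sub_eq_zero.mp h3) h

lemma pow_mod_eq {ζ : ℂ} {N : ℕ} (hζ : ζ ^ N = 1) (j : ℕ) : ζ ^ (j % N) = ζ ^ j := by
  conv_rhs => rw [← Nat.div_add_mod j N]
  rw [pow_add, pow_mul, hζ, one_pow, one_mul]

lemma succ_mod_inj {N x y : ℕ} (hx : x < N) (hy : y < N) :
    (x + 1) % N = (y + 1) % N ↔ x = y := by
  constructor
  · intro h
    by_cases hxN : x + 1 = N
    · by_cases hyN : y + 1 = N
      · omega
      · rw [hxN, Nat.mod_self, Nat.mod_eq_of_lt (by omega)] at h; omega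
    · by_cases hyN : y + 1 = N
      · rw [hyN, Nat.mod_self, Nat.mod_eq_of_lt (by omega)] at h; omega
      · rw [Nat.mod_eq_of_lt (by omega), Nat.mod_eq_of_lt (by omega)] at h; omega
  · rintro rfl; rfl

lemma sub_mod_inj {N x y : ℕ} (hx : x < N) (hy : y < N) :
    (N - x) % N = (N - y) % N ↔ x = y := by
  constructor
  · intro h
    by_cases hxN : x = 0
    · by_cases hyN : y = 0
      · omega
      · subst hxN
        rw [Nat.sub_zero, Nat.mod_self, Nat.mod_eq_of_lt (by omega)] at h; omega
    · by_cases hyN : y = 0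
      · subst hyN
        rw [Nat.sub_zero, Nat.mod_self, Nat.mod_eq_of_lt (by omega)] at h; omega
      · rw [Nat.mod_eq_of_lt (by omega), Nat.mod_eq_of_lt (by omega)] at h; omega
  · rintro rfl; rfl

/-- the folded coefficients: `hmat k = ∑_{j ≤ N, j ≡ k [MOD N]} F j` -/
noncomputable def hmat (M N : ℕ) (F : ℕ → Matrix (Fin (2*M)) (Fin (2*M)) ℂ) (k : ℕ) :
    Matrix (Fin (2*M)) (Fin (2*M)) ℂ :=
  ∑ j ∈ (Finset.range (N+1)).filter (fun j => j % N = k % N), F j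

variable {M N : ℕ} (F : ℕ → Matrix (Fin (2*M)) (Fin (2*M)) ℂ)

lemma hmat_addN (k : ℕ) : hmat M N F (k + N) = hmat M N F k := by
  simp [hmat, Nat.add_mod_right]

lemma hmat_eq (hN : 0 < N) (k : ℕ) :
    hmat M N F k = if k % N = 0 then F 0 + F N else F (k % N) := by
  by_cases h : k % N = 0
  · rw [h, if_pos rfl, hmat]
    have hset : (Finset.range (N+1)).filter (fun j => j % N = k % N) = {0, N} := by
      ext j
      simp only [Finset.mem_filter, Finset.mem_range, Finset.mem_insert,
        Finset.mem_singleton, h]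
      constructor
      · rintro ⟨hj1, hj2⟩
        rcases Nat.dvd_of_mod_eq_zero hj2 with ⟨c, rfl⟩
        rcases Nat.eq_zero_or_pos c with rfl | hc
        · left; simp
        · right
          have h1 : N * 1 ≤ N * c := Nat.mul_le_mul_left N hc
          omega
      · rintro (rfl | rfl) <;> simp [Nat.mod_self]
    rw [hset, Finset.sum_pair (by omega : (0:ℕ) ≠ N)]
  · rw [if_neg h, hmat]
    have hset : (Finset.range (N+1)).filter (fun j => j % N = k % N) = {k % N} := by
      ext j
      simp only [Finset.mem_filter, Finset.mem_range, Finset.mem_singleton]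
      constructor
      · rintro ⟨hj1, hj2⟩
        by_cases hjN : j = N
        · subst hjN; rw [Nat.mod_self] at hj2; exact absurd hj2.symm h
        · rw [Nat.mod_eq_of_lt (by omega)] at hj2; exact hj2
      · rintro rfl
        refine ⟨by have := Nat.mod_lt k hN; omega, ?_⟩
        rw [Nat.mod_eq_of_lt (Nat.mod_lt k hN)]
    rw [hset, Finset.sum_singleton]

lemma Fpoly_expand (hN : 0 < N) {ζ : ℂ} (hζ : ζ ^ N = 1) (m : ℕ) :
    Fpoly M N F (ζ ^ m) = ∑ k ∈ Finset.range N, ζ ^ (m * k) • hmat M N F k := by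
  rw [Fpoly, ← Finset.sum_fiberwise_of_maps_to (g := fun j => j % N) (t := Finset.range N)
      (fun j _ => Finset.mem_range.mpr (Nat.mod_lt _ hN))]
  refine Finset.sum_congr rfl fun k hk => ?_
  have hk' : k % N = k := Nat.mod_eq_of_lt (Finset.mem_range.mp hk)
  rw [hmat, hk', Finset.smul_sum]
  refine Finset.sum_congr rfl fun j hj => ?_
  simp only [Finset.mem_filter, Finset.mem_range] at hj
  rw [← pow_mul]
  congr 1
  rw [← pow_mod_eq hζ (m * j), ← pow_mod_eq hζ (m * k)]
  congr 1
  rw [Nat.mul_mod, hj.2, Nat.mul_mod m k, hk']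

lemma star_fpoly_expand (hN : 0 < N) {ζ : ℂ} (hζ : ζ ^ N = 1)
    (hstar : (starRingEnd ℂ) ζ = ζ⁻¹) (m : ℕ) :
    (Fpoly M N F (ζ ^ m))ᴴ = ∑ k ∈ Finset.range N, (ζ⁻¹) ^ (m * k) • (hmat M N F k)ᴴ := by
  rw [Fpoly_expand F hN hζ m, Matrix.conjTranspose_sum]
  refine Finset.sum_congr rfl fun k _ => ?_
  rw [Matrix.conjTranspose_smul]
  congr 1
  rw [star_pow]
  exact congrArg (· ^ (m * k)) hstar

/-- shifted expansion of `Fpoly` at `ζ^m` -/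
lemma Fpoly_expand_shift (hN : 0 < N) {ζ : ℂ} (hζ : ζ ^ N = 1) (m a : ℕ) :
    Fpoly M N F (ζ ^ m) = ∑ k ∈ Finset.range N, ζ ^ (m * (a + k)) • hmat M N F (a + k) := by
  rw [Fpoly_expand F hN hζ m]
  refine (sum_shift N (fun k => ζ ^ (m * k) • hmat M N F k) (fun k => ?_) a).symm
  show ζ ^ (m * (k + N)) • hmat M N F (k + N) = ζ ^ (m * k) • hmat M N F k
  rw [hmat_addN, Nat.mul_add, pow_add, Nat.mul_comm m N, pow_mul ζ N m, hζ, one_pow, mul_one]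

lemma star_fpoly_expand_shift (hN : 0 < N) {ζ : ℂ} (hζ : ζ ^ N = 1)
    (hstar : (starRingEnd ℂ) ζ = ζ⁻¹) (m a : ℕ) :
    (Fpoly M N F (ζ ^ m))ᴴ =
      ∑ k ∈ Finset.range N, (ζ⁻¹) ^ (m * (a + k)) • (hmat M N F (a + k))ᴴ := by
  rw [Fpoly_expand_shift F hN hζ m a, Matrix.conjTranspose_sum]
  refine Finset.sum_congr rfl fun k _ => ?_
  rw [Matrix.conjTranspose_smul]
  congr 1
  rw [star_pow]
  exact congrArg (· ^ (m * (a + k))) hstar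

lemma pow_mul_inv_pow_eq_one_iff {ζ : ℂ} (hN : 0 < N) (hprim : IsPrimitiveRoot ζ N)
    (hζ0 : ζ ≠ 0) (a b : ℕ) : ζ ^ a * (ζ⁻¹) ^ b = 1 ↔ a % N = b % N := by
  rw [inv_pow, mul_inv_eq_one₀ (pow_ne_zero _ hζ0)]
  rw [← pow_mod_eq hprim.pow_eq_one a, ← pow_mod_eq hprim.pow_eq_one b]
  constructor
  · exact fun h => hprim.pow_inj (Nat.mod_lt _ hN) (Nat.mod_lt _ hN) h
  · intro h; rw [h]

lemma mixed_pow_N {N : ℕ} {ζ : ℂ} (hζ : ζ ^ N = 1) (a b : ℕ) :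
    (ζ ^ a * (ζ⁻¹) ^ b) ^ N = 1 := by
  have h1 : (ζ⁻¹) ^ N = 1 := by rw [inv_pow, hζ, inv_one]
  rw [mul_pow, ← pow_mul, ← pow_mul, Nat.mul_comm a N, Nat.mul_comm b N,
    pow_mul ζ N a, pow_mul ζ⁻¹ N b, hζ, h1, one_pow, one_pow, one_mul]

lemma key_mul (hN : 0 < N)
    (hQ : ∀ ξ : ℂ, ‖ξ‖ = 1 → Fpoly M N F ξ * (Fpoly M N F ξ)ᴴ = 1) (a b : ℕ) :
    ∑ l ∈ Finset.range N, hmat M N F (a + l) * (hmat M N F (b + l))ᴴ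
      = if a % N = b % N then 1 else 0 := by
  set ζ : ℂ := Complex.exp (2 * Real.pi * Complex.I / N) with hζdef
  have hprim : IsPrimitiveRoot ζ N := Complex.isPrimitiveRoot_exp N hN.ne'
  have hζN : ζ ^ N = 1 := hprim.pow_eq_one
  have hζnorm : ‖ζ‖ = 1 := Complex.norm_eq_one_of_pow_eq_one hζN hN.ne'
  have hζ0 : ζ ≠ 0 := fun h => by simp [h] at hζnorm
  have hstar : (starRingEnd ℂ) ζ = ζ⁻¹ := by
    refine eq_inv_of_mul_eq_one_right ?_
    rw [mul_comm, Complex.conj_mul']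
    norm_cast
    rw [hζnorm, one_pow]
  have hNC : (N : ℂ) ≠ 0 := Nat.cast_ne_zero.mpr hN.ne'
  have hcalc1 : ∑ m ∈ Finset.range N,
      ((ζ⁻¹)^(m*a) * ζ^(m*b)) • (Fpoly M N F (ζ^m) * (Fpoly M N F (ζ^m))ᴴ)
      = (N:ℂ) • ∑ l ∈ Finset.range N, hmat M N F (a + l) * (hmat M N F (b + l))ᴴ := by
    calc ∑ m ∈ Finset.range N,
        ((ζ⁻¹)^(m*a) * ζ^(m*b)) • (Fpoly M N F (ζ^m) * (Fpoly M N F (ζ^m))ᴴ)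
        = ∑ m ∈ Finset.range N, ∑ k ∈ Finset.range N, ∑ l ∈ Finset.range N,
            ((ζ^k * (ζ⁻¹)^l)^m) • (hmat M N F (a+k) * (hmat M N F (b+l))ᴴ) := by
          refine Finset.sum_congr rfl fun m _ => ?_
          rw [star_fpoly_expand_shift F hN hζN hstar m b, Fpoly_expand_shift F hN hζN m a,
              Finset.sum_mul_sum, Finset.smul_sum]
          refine Finset.sum_congr rfl fun k _ => ?_
          rw [Finset.smul_sum]
          refine Finset.sum_congr rfl fun l _ => ?_
          rw [smul_mul_assoc, mul_smul_comm, smul_smul, smul_smul]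
          congr 1
          have hc : ∀ t : ℕ, (ζ⁻¹)^t * ζ^t = 1 := fun t => by
            rw [inv_pow, inv_mul_cancel₀ (pow_ne_zero t hζ0)]
          calc (ζ⁻¹)^(m*a) * ζ^(m*b) * ζ^(m*(a+k)) * (ζ⁻¹)^(m*(b+l))
              = ((ζ⁻¹)^(m*a) * ζ^(m*a)) * ((ζ⁻¹)^(m*b) * ζ^(m*b))
                  * (ζ^(m*k) * (ζ⁻¹)^(m*l)) := by
                rw [Nat.mul_add m a k, Nat.mul_add m b l, pow_add, pow_add]; ring
            _ = ζ^(m*k) * (ζ⁻¹)^(m*l) := by rw [hc, hc, one_mul, one_mul]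
            _ = (ζ^k * (ζ⁻¹)^l)^m := by
                rw [mul_pow, ← pow_mul, ← pow_mul, Nat.mul_comm k m, Nat.mul_comm l m]
      _ = ∑ k ∈ Finset.range N, ∑ l ∈ Finset.range N,
            (∑ m ∈ Finset.range N, (ζ^k * (ζ⁻¹)^l)^m) •
              (hmat M N F (a+k) * (hmat M N F (b+l))ᴴ) := by
          rw [Finset.sum_comm]
          refine Finset.sum_congr rfl fun k _ => ?_
          rw [Finset.sum_comm]
          refine Finset.sum_congr rfl fun l _ => ?_
          rw [← Finset.sum_smul]
      _ = ∑ k ∈ Finset.range N, ∑ l ∈ Finset.range N,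
            (if k = l then (N:ℂ) else 0) • (hmat M N F (a+k) * (hmat M N F (b+l))ᴴ) := by
          refine Finset.sum_congr rfl fun k hk => Finset.sum_congr rfl fun l hl => ?_
          congr 1
          rw [geom_aux _ (mixed_pow_N hζN k l)]
          simp only [pow_mul_inv_pow_eq_one_iff hN hprim hζ0,
            Nat.mod_eq_of_lt (Finset.mem_range.mp hk),
            Nat.mod_eq_of_lt (Finset.mem_range.mp hl)]
      _ = ∑ l ∈ Finset.range N, (N:ℂ) • (hmat M N F (a+l) * (hmat M N F (b+l))ᴴ) := by
          refine Finset.sum_congr rfl fun k hk => ?_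
          simp only [ite_smul, zero_smul]
          rw [Finset.sum_ite_eq, if_pos hk]
      _ = (N:ℂ) • ∑ l ∈ Finset.range N, hmat M N F (a+l) * (hmat M N F (b+l))ᴴ := by
          rw [Finset.smul_sum]
  have hcalc2 : ∑ m ∈ Finset.range N,
      ((ζ⁻¹)^(m*a) * ζ^(m*b)) • (Fpoly M N F (ζ^m) * (Fpoly M N F (ζ^m))ᴴ)
      = (N:ℂ) • (if a % N = b % N then (1 : Matrix (Fin (2*M)) (Fin (2*M)) ℂ) else 0) := by
    have hterm : ∀ m ∈ Finset.range N,
        ((ζ⁻¹)^(m*a) * ζ^(m*b)) • (Fpoly M N F (ζ^m) * (Fpoly M N F (ζ^m))ᴴ)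
          = ((ζ^b * (ζ⁻¹)^a)^m) • (1 : Matrix (Fin (2*M)) (Fin (2*M)) ℂ) := by
      intro m _
      rw [hQ (ζ^m) (by rw [norm_pow, hζnorm, one_pow])]
      congr 1
      rw [mul_pow, ← pow_mul, ← pow_mul, Nat.mul_comm b m, Nat.mul_comm a m, mul_comm]
    rw [Finset.sum_congr rfl hterm, ← Finset.sum_smul, geom_aux _ (mixed_pow_N hζN b a)]
    by_cases hab : a % N = b % N
    · rw [if_pos hab, if_pos (by rw [pow_mul_inv_pow_eq_one_iff hN hprim hζ0]; omega)]
    · rw [if_neg hab, if_neg (by rw [pow_mul_inv_pow_eq_one_iff hN hprim hζ0]; omega),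
        zero_smul, smul_zero]
  have := hcalc1.symm.trans hcalc2
  exact smul_right_injective _ hNC this

lemma key_star_mul (hN : 0 < N)
    (hQ : ∀ ξ : ℂ, ‖ξ‖ = 1 → (Fpoly M N F ξ)ᴴ * Fpoly M N F ξ = 1) (a b : ℕ) :
    ∑ l ∈ Finset.range N, (hmat M N F (a + l))ᴴ * hmat M N F (b + l)
      = if a % N = b % N then 1 else 0 := by
  set ζ : ℂ := Complex.exp (2 * Real.pi * Complex.I / N) with hζdef
  have hprim : IsPrimitiveRoot ζ N := Complex.isPrimitiveRoot_exp N hN.ne'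
  have hζN : ζ ^ N = 1 := hprim.pow_eq_one
  have hζnorm : ‖ζ‖ = 1 := Complex.norm_eq_one_of_pow_eq_one hζN hN.ne'
  have hζ0 : ζ ≠ 0 := fun h => by simp [h] at hζnorm
  have hstar : (starRingEnd ℂ) ζ = ζ⁻¹ := by
    refine eq_inv_of_mul_eq_one_right ?_
    rw [mul_comm, Complex.conj_mul']
    norm_cast
    rw [hζnorm, one_pow]
  have hNC : (N : ℂ) ≠ 0 := Nat.cast_ne_zero.mpr hN.ne'
  have hcalc1 : ∑ m ∈ Finset.range N,
      (ζ^(m*a) * (ζ⁻¹)^(m*b)) • ((Fpoly M N F (ζ^m))ᴴ * Fpoly M N F (ζ^m))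
      = (N:ℂ) • ∑ l ∈ Finset.range N, (hmat M N F (a + l))ᴴ * hmat M N F (b + l) := by
    calc ∑ m ∈ Finset.range N,
        (ζ^(m*a) * (ζ⁻¹)^(m*b)) • ((Fpoly M N F (ζ^m))ᴴ * Fpoly M N F (ζ^m))
        = ∑ m ∈ Finset.range N, ∑ k ∈ Finset.range N, ∑ l ∈ Finset.range N,
            ((ζ^l * (ζ⁻¹)^k)^m) • ((hmat M N F (a+k))ᴴ * hmat M N F (b+l)) := by
          refine Finset.sum_congr rfl fun m _ => ?_
          rw [star_fpoly_expand_shift F hN hζN hstar m a, Fpoly_expand_shift F hN hζN m b,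
              Finset.sum_mul_sum, Finset.smul_sum]
          refine Finset.sum_congr rfl fun k _ => ?_
          rw [Finset.smul_sum]
          refine Finset.sum_congr rfl fun l _ => ?_
          rw [smul_mul_assoc, mul_smul_comm, smul_smul, smul_smul]
          congr 1
          have hc : ∀ t : ℕ, (ζ⁻¹)^t * ζ^t = 1 := fun t => by
            rw [inv_pow, inv_mul_cancel₀ (pow_ne_zero t hζ0)]
          calc ζ^(m*a) * (ζ⁻¹)^(m*b) * (ζ⁻¹)^(m*(a+k)) * ζ^(m*(b+l))
              = ((ζ⁻¹)^(m*a) * ζ^(m*a)) * ((ζ⁻¹)^(m*b) * ζ^(m*b))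
                  * (ζ^(m*l) * (ζ⁻¹)^(m*k)) := by
                rw [Nat.mul_add m a k, Nat.mul_add m b l, pow_add, pow_add]; ring
            _ = ζ^(m*l) * (ζ⁻¹)^(m*k) := by rw [hc, hc, one_mul, one_mul]
            _ = (ζ^l * (ζ⁻¹)^k)^m := by
                rw [mul_pow, ← pow_mul, ← pow_mul, Nat.mul_comm l m, Nat.mul_comm k m]
      _ = ∑ k ∈ Finset.range N, ∑ l ∈ Finset.range N,
            (∑ m ∈ Finset.range N, (ζ^l * (ζ⁻¹)^k)^m) •
              ((hmat M N F (a+k))ᴴ * hmat M N F (b+l)) := by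
          rw [Finset.sum_comm]
          refine Finset.sum_congr rfl fun k _ => ?_
          rw [Finset.sum_comm]
          refine Finset.sum_congr rfl fun l _ => ?_
          rw [← Finset.sum_smul]
      _ = ∑ k ∈ Finset.range N, ∑ l ∈ Finset.range N,
            (if l = k then (N:ℂ) else 0) • ((hmat M N F (a+k))ᴴ * hmat M N F (b+l)) := by
          refine Finset.sum_congr rfl fun k hk => Finset.sum_congr rfl fun l hl => ?_
          congr 1
          rw [geom_aux _ (mixed_pow_N hζN l k)]
          simp only [pow_mul_inv_pow_eq_one_iff hN hprim hζ0,
            Nat.mod_eq_of_lt (Finset.mem_range.mp hk),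
            Nat.mod_eq_of_lt (Finset.mem_range.mp hl)]
      _ = ∑ l ∈ Finset.range N, (N:ℂ) • ((hmat M N F (a+l))ᴴ * hmat M N F (b+l)) := by
          refine Finset.sum_congr rfl fun k hk => ?_
          simp only [ite_smul, zero_smul]
          rw [Finset.sum_ite_eq', if_pos hk]
      _ = (N:ℂ) • ∑ l ∈ Finset.range N, (hmat M N F (a+l))ᴴ * hmat M N F (b+l) := by
          rw [Finset.smul_sum]
  have hcalc2 : ∑ m ∈ Finset.range N,
      (ζ^(m*a) * (ζ⁻¹)^(m*b)) • ((Fpoly M N F (ζ^m))ᴴ * Fpoly M N F (ζ^m))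
      = (N:ℂ) • (if a % N = b % N then (1 : Matrix (Fin (2*M)) (Fin (2*M)) ℂ) else 0) := by
    have hterm : ∀ m ∈ Finset.range N,
        (ζ^(m*a) * (ζ⁻¹)^(m*b)) • ((Fpoly M N F (ζ^m))ᴴ * Fpoly M N F (ζ^m))
          = ((ζ^a * (ζ⁻¹)^b)^m) • (1 : Matrix (Fin (2*M)) (Fin (2*M)) ℂ) := by
      intro m _
      rw [hQ (ζ^m) (by rw [norm_pow, hζnorm, one_pow])]
      congr 1
      rw [mul_pow, ← pow_mul, ← pow_mul, Nat.mul_comm a m, Nat.mul_comm b m]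
    rw [Finset.sum_congr rfl hterm, ← Finset.sum_smul, geom_aux _ (mixed_pow_N hζN a b)]
    by_cases hab : a % N = b % N
    · rw [if_pos hab, if_pos ((pow_mul_inv_pow_eq_one_iff hN hprim hζ0 a b).mpr hab)]
    · rw [if_neg hab, if_neg (fun h => hab ((pow_mul_inv_pow_eq_one_iff hN hprim hζ0 a b).mp h)),
        zero_smul, smul_zero]
  have := hcalc1.symm.trans hcalc2
  exact smul_right_injective _ hNC this

lemma Ucirc_eq (hN : 0 < N) (p q : Fin N × Fin (2*M)) :
    Ucirc M N F p q = (hmat M N F (q.1.1 + N - p.1.1))ᴴ p.2 q.2 := by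
  rw [hmat_eq F hN, apply_ite Matrix.conjTranspose]
  rfl

end Stmt3Aux

set_option maxHeartbeats 1600000 in
open Stmt3Aux in
theorem stmt3 (M N : ℕ) (F : ℕ → Matrix (Fin (2*M)) (Fin (2*M)) ℂ)
    (hQMF : ∀ ξ : ℂ, ‖ξ‖ = 1 →
      (1 : Matrix (Fin (2*M)) (Fin (2*M)) ℂ) - (Fpoly M N F ξ)ᴴ * Fpoly M N F ξ = 0) :
    (Ucirc M N F)ᴴ * Ucirc M N F = 1 ∧ Ucirc M N F * (Ucirc M N F)ᴴ = 1 := by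
  rcases Nat.eq_zero_or_pos N with rfl | hN
  · constructor <;> (ext p q; exact absurd p.1.isLt (Nat.not_lt_zero _))
  have hQ1 : ∀ ξ : ℂ, ‖ξ‖ = 1 → (Fpoly M N F ξ)ᴴ * Fpoly M N F ξ = 1 := fun ξ hξ =>
    (sub_eq_zero.mp (hQMF ξ hξ)).symm
  have hQ2 : ∀ ξ : ℂ, ‖ξ‖ = 1 → Fpoly M N F ξ * (Fpoly M N F ξ)ᴴ = 1 := fun ξ hξ =>
    mul_eq_one_comm.mp (hQ1 ξ hξ)
  constructor
  · ext ⟨p1, p2⟩ ⟨q1, q2⟩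
    rw [Matrix.mul_apply]
    have hterm : ∀ r : Fin N × Fin (2*M),
        (Ucirc M N F)ᴴ (p1, p2) r * Ucirc M N F r (q1, q2)
          = hmat M N F (p1.1 + N - r.1.1) p2 r.2 *
            (hmat M N F (q1.1 + N - r.1.1))ᴴ r.2 q2 := by
      intro r
      simp only [Matrix.conjTranspose_apply, Ucirc_eq F hN, star_star]
    calc ∑ r, (Ucirc M N F)ᴴ (p1, p2) r * Ucirc M N F r (q1, q2)
        = ∑ r : Fin N × Fin (2*M), hmat M N F (p1.1 + N - r.1.1) p2 r.2 *
            (hmat M N F (q1.1 + N - r.1.1))ᴴ r.2 q2 :=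
          Finset.sum_congr rfl fun r _ => hterm r
      _ = ∑ r1 : Fin N, (hmat M N F (p1.1 + N - r1.1) *
            (hmat M N F (q1.1 + N - r1.1))ᴴ) p2 q2 := by
          rw [Fintype.sum_prod_type]
          show ∑ r1 : Fin N, ∑ r2 : Fin (2*M), hmat M N F (p1.1 + N - r1.1) p2 r2 *
            (hmat M N F (q1.1 + N - r1.1))ᴴ r2 q2 = _
          exact Finset.sum_congr rfl fun r1 _ => (Matrix.mul_apply).symm
      _ = ∑ r ∈ Finset.range N, (hmat M N F (p1.1 + N - r) *
            (hmat M N F (q1.1 + N - r))ᴴ) p2 q2 :=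
          Fin.sum_univ_eq_sum_range
            (fun r => (hmat M N F (p1.1 + N - r) * (hmat M N F (q1.1 + N - r))ᴴ) p2 q2) N
      _ = ∑ r ∈ Finset.range N, (hmat M N F ((p1.1 + 1) + r) *
            (hmat M N F ((q1.1 + 1) + r))ᴴ) p2 q2 := by
          rw [← Finset.sum_range_reflect]
          refine Finset.sum_congr rfl fun r hr => ?_
          have hr' := Finset.mem_range.mp hr
          rw [show p1.1 + N - (N - 1 - r) = (p1.1 + 1) + r by omega,
            show q1.1 + N - (N - 1 - r) = (q1.1 + 1) + r by omega]
      _ = (∑ r ∈ Finset.range N, hmat M N F ((p1.1 + 1) + r) *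
            (hmat M N F ((q1.1 + 1) + r))ᴴ) p2 q2 := (Matrix.sum_apply _ _ _ _).symm
      _ = (if (p1.1 + 1) % N = (q1.1 + 1) % N then (1 : Matrix (Fin (2*M)) (Fin (2*M)) ℂ)
            else 0) p2 q2 := by rw [key_mul F hN hQ2 (p1.1 + 1) (q1.1 + 1)]
      _ = (1 : Matrix (Fin N × Fin (2*M)) (Fin N × Fin (2*M)) ℂ) (p1, p2) (q1, q2) := by
          by_cases h : p1 = q1
          · subst h
            rw [if_pos rfl]
            simp [Matrix.one_apply, Prod.ext_iff]
          · rw [if_neg (fun hc => h (Fin.ext ((succ_mod_inj p1.isLt q1.isLt).mp hc)))]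
            simp [Matrix.one_apply, Prod.ext_iff, h]
  · ext ⟨p1, p2⟩ ⟨q1, q2⟩
    rw [Matrix.mul_apply]
    have hterm : ∀ r : Fin N × Fin (2*M),
        Ucirc M N F (p1, p2) r * (Ucirc M N F)ᴴ r (q1, q2)
          = (hmat M N F (r.1.1 + N - p1.1))ᴴ p2 r.2 *
            hmat M N F (r.1.1 + N - q1.1) r.2 q2 := by
      intro r
      simp only [Matrix.conjTranspose_apply, Ucirc_eq F hN, star_star]
    calc ∑ r, Ucirc M N F (p1, p2) r * (Ucirc M N F)ᴴ r (q1, q2)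
        = ∑ r : Fin N × Fin (2*M), (hmat M N F (r.1.1 + N - p1.1))ᴴ p2 r.2 *
            hmat M N F (r.1.1 + N - q1.1) r.2 q2 :=
          Finset.sum_congr rfl fun r _ => hterm r
      _ = ∑ r1 : Fin N, ((hmat M N F (r1.1 + N - p1.1))ᴴ *
            hmat M N F (r1.1 + N - q1.1)) p2 q2 := by
          rw [Fintype.sum_prod_type]
          show ∑ r1 : Fin N, ∑ r2 : Fin (2*M), (hmat M N F (r1.1 + N - p1.1))ᴴ p2 r2 *
            hmat M N F (r1.1 + N - q1.1) r2 q2 = _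
          exact Finset.sum_congr rfl fun r1 _ => (Matrix.mul_apply).symm
      _ = ∑ r ∈ Finset.range N, ((hmat M N F (r + N - p1.1))ᴴ *
            hmat M N F (r + N - q1.1)) p2 q2 :=
          Fin.sum_univ_eq_sum_range
            (fun r => ((hmat M N F (r + N - p1.1))ᴴ * hmat M N F (r + N - q1.1)) p2 q2) N
      _ = ∑ r ∈ Finset.range N, ((hmat M N F ((N - p1.1) + r))ᴴ *
            hmat M N F ((N - q1.1) + r)) p2 q2 := by
          refine Finset.sum_congr rfl fun r hr => ?_
          have hp := p1.isLt
          have hq := q1.isLt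
          rw [show r + N - p1.1 = (N - p1.1) + r by omega,
            show r + N - q1.1 = (N - q1.1) + r by omega]
      _ = (∑ r ∈ Finset.range N, (hmat M N F ((N - p1.1) + r))ᴴ *
            hmat M N F ((N - q1.1) + r)) p2 q2 := (Matrix.sum_apply _ _ _ _).symm
      _ = (if (N - p1.1) % N = (N - q1.1) % N then (1 : Matrix (Fin (2*M)) (Fin (2*M)) ℂ)
            else 0) p2 q2 := by rw [key_star_mul F hN hQ1 (N - p1.1) (N - q1.1)]
      _ = (1 : Matrix (Fin N × Fin (2*M)) (Fin N × Fin (2*M)) ℂ) (p1, p2) (q1, q2) := by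
          by_cases h : p1 = q1
          · subst h
            rw [if_pos rfl]
            simp [Matrix.one_apply, Prod.ext_iff]
          · rw [if_neg (fun hc => h (Fin.ext ((sub_mod_inj p1.isLt q1.isLt).mp hc)))]
            simp [Matrix.one_apply, Prod.ext_iff, h]
end

section
/- If F(ξ) = Σ_{j=0}^N F_j ξ^j, F_j ∈ ℂ^{2M×2M}, satisfies the QMF condition on the unit circle, then the blocks B and D from the ABCD construction satisfy B D^N = 0. -/
open Matrix Finset
lemma circle_inf : {ξ : ℂ | ‖ξ‖ = 1}.Infinite := by
  apply Set.infinite_of_injective_forall_mem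
    (f := fun n : ℕ => Complex.exp ((((n:ℝ)+1)⁻¹ : ℝ) * Complex.I))
  case hi =>
    intro a b hab
    simp only at hab
    rw [Complex.exp_eq_exp_iff_exists_int] at hab
    obtain ⟨k, hk⟩ := hab
    have h1 : (((a:ℝ)+1)⁻¹ : ℝ) = (((b:ℝ)+1)⁻¹ : ℝ) + k * (2*Real.pi) := by
      have h2 := congrArg Complex.im hk
      simp only [Complex.add_im, Complex.mul_im, Complex.I_im, Complex.I_re,
        Complex.ofReal_im, Complex.ofReal_re, Complex.intCast_im, Complex.intCast_re,
        Complex.mul_re, Complex.ofReal_mul, Complex.re_ofNat, Complex.im_ofNat,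
        mul_one, mul_zero, zero_mul, add_zero, zero_add, sub_zero] at h2
      linarith
    have hpi := Real.pi_gt_three
    have ha1 : (0:ℝ) < (a:ℝ)+1 := by positivity
    have hb1 : (0:ℝ) < (b:ℝ)+1 := by positivity
    have ha2 : (((a:ℝ)+1)⁻¹ : ℝ) ≤ 1 := by rw [inv_le_one_iff₀]; right; linarith
    have hb2 : (((b:ℝ)+1)⁻¹ : ℝ) ≤ 1 := by rw [inv_le_one_iff₀]; right; linarith
    have ha3 : (0:ℝ) < ((a:ℝ)+1)⁻¹ := by positivity
    have hb3 : (0:ℝ) < ((b:ℝ)+1)⁻¹ := by positivity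
    have hk0 : k = 0 := by
      rcases lt_trichotomy k 0 with h | h | h
      · exfalso
        have hk1 : k ≤ -1 := by omega
        have : (k:ℝ) ≤ -1 := by exact_mod_cast hk1
        nlinarith
      · exact h
      · exfalso
        have : (1:ℝ) ≤ (k:ℝ) := by exact_mod_cast h
        nlinarith
    rw [hk0] at h1
    push_cast at h1
    simp only [zero_mul, add_zero] at h1
    have h3 := inv_injective h1
    have : (a:ℝ) = (b:ℝ) := by linarith
    exact_mod_cast this
  case hf =>
    intro n
    simp [Set.mem_setOf_eq, Complex.norm_exp]

section AuxStmt6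

variable {M N : ℕ}

/-- split a range sum -/
lemma sum_range_split' {α : Type*} [AddCommMonoid α] (f : ℕ → α) (c n : ℕ) (h : c ≤ n) :
    ∑ k ∈ Finset.range n, f k
      = ∑ k ∈ Finset.range c, f k + ∑ k ∈ Finset.range (n - c), f (c + k) := by
  rw [← Finset.sum_Ico_eq_sum_range]
  rw [Finset.range_eq_Ico, ← Finset.sum_Ico_consecutive f (Nat.zero_le c) h]
  rw [Finset.range_eq_Ico]

/-- generic coefficient extraction from an identity on the unit circle -/
lemma coeff_extract (N : ℕ) (e : ℂ) (a : ℕ → ℕ → ℂ)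
    (h : ∀ ξ : ℂ, ‖ξ‖ = 1 →
      ∑ i ∈ Finset.range (N+1), ∑ j ∈ Finset.range (N+1), a i j * ξ^(N - i + j) = ξ^N * e)
    (n : ℕ) :
    ∑ i ∈ Finset.range (N+1), ∑ j ∈ Finset.range (N+1),
      (if N - i + j = n then a i j else 0) = if n = N then e else 0 := by
  classical
  set p : Polynomial ℂ :=
    ∑ i ∈ Finset.range (N+1), ∑ j ∈ Finset.range (N+1),
      Polynomial.C (a i j) * Polynomial.X ^ (N - i + j) with hp
  set q : Polynomial ℂ := Polynomial.C e * Polynomial.X ^ N with hq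
  have hpq : p = q := by
    apply Polynomial.eq_of_infinite_eval_eq
    apply Set.Infinite.mono _ circle_inf
    intro ξ hξ
    simp only [Set.mem_setOf_eq] at hξ ⊢
    rw [hp, hq]
    simp only [Polynomial.eval_finset_sum, Polynomial.eval_mul, Polynomial.eval_C,
      Polynomial.eval_pow, Polynomial.eval_X]
    rw [h ξ hξ]; ring
  have := congrArg (fun r : Polynomial ℂ => r.coeff n) hpq
  simp only [hp, hq, Polynomial.finset_sum_coeff, Polynomial.coeff_C_mul,
    Polynomial.coeff_X_pow] at this
  calc ∑ i ∈ Finset.range (N+1), ∑ j ∈ Finset.range (N+1),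
        (if N - i + j = n then a i j else 0)
      = ∑ i ∈ Finset.range (N+1), ∑ j ∈ Finset.range (N+1),
        a i j * (if n = N - i + j then 1 else 0) := by
        refine Finset.sum_congr rfl fun i _ => Finset.sum_congr rfl fun j _ => ?_
        by_cases hc : N - i + j = n
        · simp [hc]
        · rw [if_neg hc, if_neg (fun hh => hc hh.symm), mul_zero]
    _ = e * (if n = N then 1 else 0) := this
    _ = if n = N then e else 0 := by split <;> simp

open Matrix Finset

/-- The `(N+1) × (N+1)` block matrix `T` with first block column `(F_0,…,F_N)ᵀ` whose
remaining block columns form a block circulant with first block row `(F_N,…,F_1)`;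
equivalently, the block circulant with block `(i,j)` equal to `F_{(i-j) mod (N+1)}`. -/
noncomputable def Tcirc (M N : ℕ) (F : ℕ → Matrix (Fin (2*M)) (Fin (2*M)) ℂ) :
    Matrix (Fin (N+1) × Fin (2*M)) (Fin (N+1) × Fin (2*M)) ℂ :=
  fun p q => F ((p.1.1 + (N+1) - q.1.1) % (N+1)) p.2 q.2

/-- The block diagonal matrix `diag(I, U)` where `U` is the block circulant with first
block row `(F_0*+F_N*, F_1*, …, F_{N-1}*)`. -/
noncomputable def Ediag (M N : ℕ) (F : ℕ → Matrix (Fin (2*M)) (Fin (2*M)) ℂ) :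
    Matrix (Fin (N+1) × Fin (2*M)) (Fin (N+1) × Fin (2*M)) ℂ :=
  fun p q =>
    if p.1.1 = 0 then (if q.1.1 = 0 ∧ p.2 = q.2 then 1 else 0)
    else if q.1.1 = 0 then 0
    else
      (if (q.1.1 + N - p.1.1) % N = 0 then (F 0 + F N)ᴴ
       else (F ((q.1.1 + N - p.1.1) % N))ᴴ) p.2 q.2

/-- The matrix `(A B; C D) = T · diag(I, U)` of the Definition. -/
noncomputable def ABCDmat (M N : ℕ) (F : ℕ → Matrix (Fin (2*M)) (Fin (2*M)) ℂ) :
    Matrix (Fin (N+1) × Fin (2*M)) (Fin (N+1) × Fin (2*M)) ℂ :=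
  Tcirc M N F * Ediag M N F

/-- The block `A ∈ ℂ^{2M×2M}` of `(A B; C D)`. -/
noncomputable def Amat (M N : ℕ) (F : ℕ → Matrix (Fin (2*M)) (Fin (2*M)) ℂ) :
    Matrix (Fin (2*M)) (Fin (2*M)) ℂ :=
  fun r s => ABCDmat M N F ((0 : Fin (N+1)), r) ((0 : Fin (N+1)), s)

/-- The block `B ∈ ℂ^{2M×2MN}` of `(A B; C D)`. -/
noncomputable def Bmat (M N : ℕ) (F : ℕ → Matrix (Fin (2*M)) (Fin (2*M)) ℂ) :
    Matrix (Fin (2*M)) (Fin N × Fin (2*M)) ℂ :=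
  fun r q => ABCDmat M N F ((0 : Fin (N+1)), r) (q.1.succ, q.2)

/-- The block `C ∈ ℂ^{2MN×2M}` of `(A B; C D)`. -/
noncomputable def Cmat (M N : ℕ) (F : ℕ → Matrix (Fin (2*M)) (Fin (2*M)) ℂ) :
    Matrix (Fin N × Fin (2*M)) (Fin (2*M)) ℂ :=
  fun p s => ABCDmat M N F (p.1.succ, p.2) ((0 : Fin (N+1)), s)

/-- The block `D ∈ ℂ^{2MN×2MN}` of `(A B; C D)`. -/
noncomputable def Dmat (M N : ℕ) (F : ℕ → Matrix (Fin (2*M)) (Fin (2*M)) ℂ) :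
    Matrix (Fin N × Fin (2*M)) (Fin N × Fin (2*M)) ℂ :=
  fun p q => ABCDmat M N F (p.1.succ, p.2) (q.1.succ, q.2)



variable (M N : ℕ) (F : ℕ → Matrix (Fin (2*M)) (Fin (2*M)) ℂ)

lemma pow_id {N : ℕ} (ξ : ℂ) (hξ : ‖ξ‖ = 1) {i : ℕ} (hi : i ≤ N) (j : ℕ) :
    ξ^(N - i + j) = ξ^N * (((starRingEnd ℂ) ξ)^i * ξ^j) := by
  have hne : ξ ≠ 0 := by intro h; rw [h] at hξ; simp at hξ
  have hconj : (starRingEnd ℂ) ξ = ξ⁻¹ := (Complex.inv_eq_conj hξ).symm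
  have hsplit : ξ^N = ξ^(N-i) * ξ^i := by rw [← pow_add]; congr 1; omega
  rw [hconj, inv_pow, hsplit, pow_add, mul_assoc, ← mul_assoc (ξ^i),
    mul_inv_cancel₀ (pow_ne_zero _ hne), one_mul]

lemma eval_col
    (hQMF : ∀ ξ : ℂ, ‖ξ‖ = 1 →
      (1 : Matrix (Fin (2*M)) (Fin (2*M)) ℂ) - (Fpoly M N F ξ)ᴴ * Fpoly M N F ξ = 0)
    (r s : Fin (2*M)) (ξ : ℂ) (hξ : ‖ξ‖ = 1) :
    ∑ i ∈ Finset.range (N+1), ∑ j ∈ Finset.range (N+1),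
      ((F i)ᴴ * F j) r s * ξ^(N - i + j) = ξ^N * (1 : Matrix (Fin (2*M)) (Fin (2*M)) ℂ) r s := by
  have h1 : (Fpoly M N F ξ)ᴴ * Fpoly M N F ξ = 1 := (sub_eq_zero.mp (hQMF ξ hξ)).symm
  rw [← h1]
  have expand : ξ^N * ((Fpoly M N F ξ)ᴴ * Fpoly M N F ξ) r s
      = ∑ u, ∑ i ∈ Finset.range (N+1), ∑ j ∈ Finset.range (N+1),
          (starRingEnd ℂ) (F i u r) * F j u s * (ξ^N * (((starRingEnd ℂ) ξ)^i * ξ^j)) := by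
    rw [Matrix.mul_apply, Finset.mul_sum]
    refine Finset.sum_congr rfl fun u _ => ?_
    simp only [Matrix.conjTranspose_apply, RCLike.star_def]
    have hl : (Fpoly M N F ξ) u s = ∑ j ∈ Finset.range (N+1), ξ^j * F j u s := by
      simp [Fpoly, Matrix.sum_apply]
    have hr : (starRingEnd ℂ) ((Fpoly M N F ξ) u r)
        = ∑ i ∈ Finset.range (N+1), ((starRingEnd ℂ) ξ)^i * (starRingEnd ℂ) (F i u r) := by
      simp [Fpoly, Matrix.sum_apply, map_sum, _root_.map_mul, map_pow]
    rw [hl, hr, Finset.sum_mul_sum, Finset.mul_sum]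
    refine Finset.sum_congr rfl fun i _ => ?_
    rw [Finset.mul_sum]
    refine Finset.sum_congr rfl fun j _ => ?_
    ring
  rw [expand]
  conv_rhs => rw [Finset.sum_comm]
  refine Finset.sum_congr rfl fun i hi => ?_
  rw [Finset.sum_comm]
  refine Finset.sum_congr rfl fun j _ => ?_
  rw [Matrix.mul_apply, Finset.sum_mul]
  refine Finset.sum_congr rfl fun u _ => ?_
  simp only [Matrix.conjTranspose_apply, RCLike.star_def]
  rw [pow_id ξ hξ (Nat.lt_succ_iff.mp (Finset.mem_range.mp hi))]

lemma eval_row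
    (hQMF : ∀ ξ : ℂ, ‖ξ‖ = 1 →
      (1 : Matrix (Fin (2*M)) (Fin (2*M)) ℂ) - (Fpoly M N F ξ)ᴴ * Fpoly M N F ξ = 0)
    (r s : Fin (2*M)) (ξ : ℂ) (hξ : ‖ξ‖ = 1) :
    ∑ i ∈ Finset.range (N+1), ∑ j ∈ Finset.range (N+1),
      (F j * (F i)ᴴ) r s * ξ^(N - i + j) = ξ^N * (1 : Matrix (Fin (2*M)) (Fin (2*M)) ℂ) r s := by
  have h1 : Fpoly M N F ξ * (Fpoly M N F ξ)ᴴ = 1 :=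
    mul_eq_one_comm.mp ((sub_eq_zero.mp (hQMF ξ hξ)).symm)
  rw [← h1]
  have expand : ξ^N * (Fpoly M N F ξ * (Fpoly M N F ξ)ᴴ) r s
      = ∑ u, ∑ i ∈ Finset.range (N+1), ∑ j ∈ Finset.range (N+1),
          F j r u * (starRingEnd ℂ) (F i s u) * (ξ^N * (((starRingEnd ℂ) ξ)^i * ξ^j)) := by
    rw [Matrix.mul_apply, Finset.mul_sum]
    refine Finset.sum_congr rfl fun u _ => ?_
    simp only [Matrix.conjTranspose_apply, RCLike.star_def]
    have hl : (Fpoly M N F ξ) r u = ∑ j ∈ Finset.range (N+1), ξ^j * F j r u := by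
      simp [Fpoly, Matrix.sum_apply]
    have hr : (starRingEnd ℂ) ((Fpoly M N F ξ) s u)
        = ∑ i ∈ Finset.range (N+1), ((starRingEnd ℂ) ξ)^i * (starRingEnd ℂ) (F i s u) := by
      simp [Fpoly, Matrix.sum_apply, map_sum, _root_.map_mul, map_pow]
    rw [hl, hr, Finset.sum_mul_sum, Finset.sum_comm, Finset.mul_sum]
    refine Finset.sum_congr rfl fun i _ => ?_
    rw [Finset.mul_sum]
    refine Finset.sum_congr rfl fun j _ => ?_
    ring
  rw [expand]
  conv_rhs => rw [Finset.sum_comm]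
  refine Finset.sum_congr rfl fun i hi => ?_
  rw [Finset.sum_comm]
  refine Finset.sum_congr rfl fun j _ => ?_
  rw [Matrix.mul_apply, Finset.sum_mul]
  refine Finset.sum_congr rfl fun u _ => ?_
  simp only [Matrix.conjTranspose_apply, RCLike.star_def]
  rw [pow_id ξ hξ (Nat.lt_succ_iff.mp (Finset.mem_range.mp hi))]

/-- `F` with index extended to `ℤ` by zero outside `[0, N]`. -/
noncomputable def Fzext (M N : ℕ) (F : ℕ → Matrix (Fin (2*M)) (Fin (2*M)) ℂ) (i : ℤ) :
    Matrix (Fin (2*M)) (Fin (2*M)) ℂ :=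
  if 0 ≤ i ∧ i ≤ (N:ℤ) then F i.toNat else 0

lemma Fzext_nat {k : ℕ} (h : k ≤ N) : Fzext M N F k = F k := by
  simp only [Fzext, Int.toNat_natCast]
  rw [if_pos ⟨by omega, by exact_mod_cast h⟩]

lemma Fzext_neg {i : ℤ} (h : i < 0) : Fzext M N F i = 0 := by
  simp only [Fzext]
  rw [if_neg (fun hc => by omega)]

lemma Fzext_big {i : ℤ} (h : (N:ℤ) < i) : Fzext M N F i = 0 := by
  simp only [Fzext]
  rw [if_neg (fun hc => by omega)]

lemma KCbase
    (hQMF : ∀ ξ : ℂ, ‖ξ‖ = 1 →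
      (1 : Matrix (Fin (2*M)) (Fin (2*M)) ℂ) - (Fpoly M N F ξ)ᴴ * Fpoly M N F ξ = 0)
    (d : ℤ) :
    ∑ k ∈ Finset.range (N+1), (Fzext M N F k)ᴴ * Fzext M N F (k + d)
      = if d = 0 then 1 else 0 := by
  by_cases hd : d < -(N:ℤ) ∨ (N:ℤ) < d
  · rw [if_neg (by omega)]
    refine Finset.sum_eq_zero fun k hk => ?_
    have hk' := Finset.mem_range.mp hk
    rcases hd with hd | hd
    · rw [Fzext_neg M N F (i := (k:ℤ)+d) (by omega), Matrix.mul_zero]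
    · rw [Fzext_big M N F (i := (k:ℤ)+d) (by omega), Matrix.mul_zero]
  · push_neg at hd
    obtain ⟨hd1, hd2⟩ := hd
    ext r s
    have key := coeff_extract N ((1 : Matrix (Fin (2*M)) (Fin (2*M)) ℂ) r s)
      (fun i j => ((F i)ᴴ * F j) r s) (eval_col M N F hQMF r s) ((N:ℤ) + d).toNat
    have h1 : ∀ i ∈ Finset.range (N+1),
        (∑ j ∈ Finset.range (N+1),
          if N - i + j = ((N:ℤ) + d).toNat then ((F i)ᴴ * F j) r s else 0)
        = ((F i)ᴴ * Fzext M N F (i + d)) r s := by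
      intro i hi
      have hiN : i ≤ N := Nat.lt_succ_iff.mp (Finset.mem_range.mp hi)
      by_cases hin : 0 ≤ (i:ℤ) + d ∧ (i:ℤ) + d ≤ (N:ℤ)
      · have hj0 : ((i:ℤ) + d).toNat ≤ N := by omega
        rw [Finset.sum_eq_single_of_mem (((i:ℤ) + d).toNat)
          (Finset.mem_range.mpr (by omega))]
        · rw [if_pos (by omega), Fzext, if_pos hin]
        · intro j hj hne
          rw [if_neg]
          intro hc
          exact hne (by omega)
      · rw [Fzext, if_neg hin, Matrix.mul_zero, Matrix.zero_apply]
        refine Finset.sum_eq_zero fun j hj => ?_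
        have hjN : j ≤ N := Nat.lt_succ_iff.mp (Finset.mem_range.mp hj)
        rw [if_neg]
        intro hc
        omega
    rw [Finset.sum_congr rfl h1] at key
    have h2 : ∀ k ∈ Finset.range (N+1),
        ((Fzext M N F k)ᴴ * Fzext M N F (k + d)) r s
          = ((F k)ᴴ * Fzext M N F (k + d)) r s := by
      intro k hk
      rw [Fzext_nat M N F (Nat.lt_succ_iff.mp (Finset.mem_range.mp hk))]
    rw [Matrix.sum_apply, Finset.sum_congr rfl h2, key]
    have h3 : (((N:ℤ) + d).toNat = N) ↔ (d = 0) := by omega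
    by_cases hd0 : d = 0
    · rw [if_pos (h3.mpr hd0), if_pos hd0]
    · rw [if_neg (fun hc => hd0 (h3.mp hc)), if_neg hd0, Matrix.zero_apply]

lemma KRbase
    (hQMF : ∀ ξ : ℂ, ‖ξ‖ = 1 →
      (1 : Matrix (Fin (2*M)) (Fin (2*M)) ℂ) - (Fpoly M N F ξ)ᴴ * Fpoly M N F ξ = 0)
    (d : ℤ) :
    ∑ k ∈ Finset.range (N+1), Fzext M N F k * (Fzext M N F (k + d))ᴴ
      = if d = 0 then 1 else 0 := by
  by_cases hd : d < -(N:ℤ) ∨ (N:ℤ) < d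
  · rw [if_neg (by omega)]
    refine Finset.sum_eq_zero fun k hk => ?_
    have hk' := Finset.mem_range.mp hk
    rcases hd with hd | hd
    · rw [Fzext_neg M N F (i := (k:ℤ)+d) (by omega), Matrix.conjTranspose_zero,
        Matrix.mul_zero]
    · rw [Fzext_big M N F (i := (k:ℤ)+d) (by omega), Matrix.conjTranspose_zero,
        Matrix.mul_zero]
  · push_neg at hd
    obtain ⟨hd1, hd2⟩ := hd
    ext r s
    have key := coeff_extract N ((1 : Matrix (Fin (2*M)) (Fin (2*M)) ℂ) r s)
      (fun i j => (F j * (F i)ᴴ) r s) (eval_row M N F hQMF r s) ((N:ℤ) - d).toNat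
    rw [Finset.sum_comm] at key
    have h1 : ∀ j ∈ Finset.range (N+1),
        (∑ i ∈ Finset.range (N+1),
          if N - i + j = ((N:ℤ) - d).toNat then (F j * (F i)ᴴ) r s else 0)
        = (F j * (Fzext M N F (j + d))ᴴ) r s := by
      intro j hj
      have hjN : j ≤ N := Nat.lt_succ_iff.mp (Finset.mem_range.mp hj)
      by_cases hin : 0 ≤ (j:ℤ) + d ∧ (j:ℤ) + d ≤ (N:ℤ)
      · rw [Finset.sum_eq_single_of_mem (((j:ℤ) + d).toNat)
          (Finset.mem_range.mpr (by omega))]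
        · rw [if_pos (by omega)]
          unfold Fzext
          rw [if_pos hin]
        · intro i hi hne
          have hiN : i ≤ N := Nat.lt_succ_iff.mp (Finset.mem_range.mp hi)
          rw [if_neg]
          intro hc
          exact hne (by omega)
      · rw [Fzext, if_neg hin, Matrix.conjTranspose_zero, Matrix.mul_zero,
          Matrix.zero_apply]
        refine Finset.sum_eq_zero fun i hi => ?_
        have hiN : i ≤ N := Nat.lt_succ_iff.mp (Finset.mem_range.mp hi)
        rw [if_neg]
        intro hc
        omega
    rw [Finset.sum_congr rfl h1] at key
    have h2 : ∀ k ∈ Finset.range (N+1),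
        (Fzext M N F k * (Fzext M N F (k + d))ᴴ) r s
          = (F k * (Fzext M N F (k + d))ᴴ) r s := by
      intro k hk
      rw [Fzext_nat M N F (Nat.lt_succ_iff.mp (Finset.mem_range.mp hk))]
    rw [Matrix.sum_apply, Finset.sum_congr rfl h2, key]
    have h3 : (((N:ℤ) - d).toNat = N) ↔ (d = 0) := by omega
    by_cases hd0 : d = 0
    · rw [if_pos (h3.mpr hd0), if_pos hd0]
    · rw [if_neg (fun hc => hd0 (h3.mp hc)), if_neg hd0, Matrix.zero_apply]

lemma KRgen
    (hQMF : ∀ ξ : ℂ, ‖ξ‖ = 1 →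
      (1 : Matrix (Fin (2*M)) (Fin (2*M)) ℂ) - (Fpoly M N F ξ)ᴴ * Fpoly M N F ξ = 0)
    (a b : ℤ) (n : ℕ) (h1 : a ≤ 0) (h2 : (N:ℤ)+1 ≤ (n:ℤ) + a) :
    ∑ k ∈ Finset.range n, Fzext M N F (k + a) * (Fzext M N F (k + b))ᴴ
      = if a = b then 1 else 0 := by
  set A : ℕ := (-a).toNat with hA
  have hAa : (A:ℤ) = -a := by omega
  rw [sum_range_split' _ A n (by omega)]
  have hz1 : ∑ k ∈ Finset.range A, Fzext M N F (k + a) * (Fzext M N F (k + b))ᴴ = 0 := by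
    refine Finset.sum_eq_zero fun k hk => ?_
    have := Finset.mem_range.mp hk
    rw [Fzext_neg M N F (i := (k:ℤ)+a) (by omega), Matrix.zero_mul]
  rw [hz1, zero_add]
  rw [sum_range_split' _ (N+1) (n - A) (by omega)]
  have hz2 : ∑ k ∈ Finset.range (n - A - (N+1)),
      Fzext M N F (↑(A + (N + 1 + k)) + a) * (Fzext M N F (↑(A + (N + 1 + k)) + b))ᴴ = 0 := by
    refine Finset.sum_eq_zero fun k hk => ?_
    rw [Fzext_big M N F (i := (↑(A + (N + 1 + k)):ℤ)+a) (by push_cast; omega), Matrix.zero_mul]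
  rw [hz2, add_zero]
  have hmid : ∀ k ∈ Finset.range (N+1),
      Fzext M N F (↑(A + k) + a) * (Fzext M N F (↑(A + k) + b))ᴴ
        = Fzext M N F k * (Fzext M N F (↑k + (b - a)))ᴴ := by
    intro k hk
    rw [show ((A + k:ℕ):ℤ) + a = (k:ℤ) by push_cast; omega,
        show ((A + k:ℕ):ℤ) + b = (k:ℤ) + (b - a) by push_cast; omega]
  rw [Finset.sum_congr rfl hmid, KRbase M N F hQMF (b - a)]
  by_cases hab : a = b
  · rw [if_pos (by omega), if_pos hab]
  · rw [if_neg (by omega), if_neg hab]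

lemma KCgen
    (hQMF : ∀ ξ : ℂ, ‖ξ‖ = 1 →
      (1 : Matrix (Fin (2*M)) (Fin (2*M)) ℂ) - (Fpoly M N F ξ)ᴴ * Fpoly M N F ξ = 0)
    (a b : ℤ) (n : ℕ) (h1 : a ≤ 0) (h2 : (N:ℤ)+1 ≤ (n:ℤ) + a) :
    ∑ k ∈ Finset.range n, (Fzext M N F (k + a))ᴴ * Fzext M N F (k + b)
      = if a = b then 1 else 0 := by
  set A : ℕ := (-a).toNat with hA
  have hAa : (A:ℤ) = -a := by omega
  rw [sum_range_split' _ A n (by omega)]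
  have hz1 : ∑ k ∈ Finset.range A, (Fzext M N F (k + a))ᴴ * Fzext M N F (k + b) = 0 := by
    refine Finset.sum_eq_zero fun k hk => ?_
    have := Finset.mem_range.mp hk
    rw [Fzext_neg M N F (i := (k:ℤ)+a) (by omega), Matrix.conjTranspose_zero, Matrix.zero_mul]
  rw [hz1, zero_add]
  rw [sum_range_split' _ (N+1) (n - A) (by omega)]
  have hz2 : ∑ k ∈ Finset.range (n - A - (N+1)),
      (Fzext M N F (↑(A + (N + 1 + k)) + a))ᴴ * Fzext M N F (↑(A + (N + 1 + k)) + b) = 0 := by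
    refine Finset.sum_eq_zero fun k hk => ?_
    rw [Fzext_big M N F (i := (↑(A + (N + 1 + k)):ℤ)+a) (by push_cast; omega),
      Matrix.conjTranspose_zero, Matrix.zero_mul]
  rw [hz2, add_zero]
  have hmid : ∀ k ∈ Finset.range (N+1),
      (Fzext M N F (↑(A + k) + a))ᴴ * Fzext M N F (↑(A + k) + b)
        = (Fzext M N F k)ᴴ * Fzext M N F (↑k + (b - a)) := by
    intro k hk
    rw [show ((A + k:ℕ):ℤ) + a = (k:ℤ) by push_cast; omega,
        show ((A + k:ℕ):ℤ) + b = (k:ℤ) + (b - a) by push_cast; omega]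
  rw [Finset.sum_congr rfl hmid, KCbase M N F hQMF (b - a)]
  by_cases hab : a = b
  · rw [if_pos (by omega), if_pos hab]
  · rw [if_neg (by omega), if_neg hab]

lemma KCgen'
    (hQMF : ∀ ξ : ℂ, ‖ξ‖ = 1 →
      (1 : Matrix (Fin (2*M)) (Fin (2*M)) ℂ) - (Fpoly M N F ξ)ᴴ * Fpoly M N F ξ = 0)
    (a b : ℤ) (n : ℕ) (h1 : b ≤ 0) (h2 : (N:ℤ)+1 ≤ (n:ℤ) + b) :
    ∑ k ∈ Finset.range n, (Fzext M N F (k + a))ᴴ * Fzext M N F (k + b)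
      = if a = b then 1 else 0 := by
  have h := congrArg Matrix.conjTranspose (KCgen M N F hQMF b a n h1 h2)
  rw [Matrix.conjTranspose_sum] at h
  have h2' : ∀ k ∈ Finset.range n,
      ((Fzext M N F (k + b))ᴴ * Fzext M N F (k + a))ᴴ
        = (Fzext M N F (k + a))ᴴ * Fzext M N F (k + b) := by
    intro k _
    rw [Matrix.conjTranspose_mul, Matrix.conjTranspose_conjTranspose]
  rw [Finset.sum_congr rfl h2'] at h
  rw [h]
  by_cases hab : a = b
  · rw [if_pos hab.symm, if_pos hab, Matrix.conjTranspose_one]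
  · rw [if_neg (fun hc => hab hc.symm), if_neg hab, Matrix.conjTranspose_zero]

lemma ext_below {α : Type*} [AddCommMonoid α] (f : ℕ → α) (c n : ℕ) :
    ∑ x ∈ Finset.range (c + n), f x
      = ∑ x ∈ Finset.range c, f x + ∑ κ ∈ Finset.range n, f (c + κ) := by
  rw [sum_range_split' f c (c+n) (by omega)]
  have h : c + n - c = n := by omega
  rw [h]

/-- shift a row-type sum: `∑_{κ<n} Fz(κ+c+a) Fz(κ+c+b)ᴴ = full - initial` -/
lemma shiftR (a b : ℤ) (c n : ℕ) :
    ∑ κ ∈ Finset.range n, Fzext M N F ((κ:ℤ) + c + a) * (Fzext M N F ((κ:ℤ) + c + b))ᴴ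
      = ∑ x ∈ Finset.range (c + n), Fzext M N F ((x:ℤ) + a) * (Fzext M N F ((x:ℤ) + b))ᴴ
        - ∑ x ∈ Finset.range c, Fzext M N F ((x:ℤ) + a) * (Fzext M N F ((x:ℤ) + b))ᴴ := by
  rw [ext_below _ c n, add_sub_cancel_left]
  refine Finset.sum_congr rfl fun κ _ => ?_
  rw [show ((c + κ : ℕ):ℤ) + a = (κ:ℤ) + c + a by push_cast; ring,
      show ((c + κ : ℕ):ℤ) + b = (κ:ℤ) + c + b by push_cast; ring]

/-- shift a column-type sum -/
lemma shiftC (a b : ℤ) (c n : ℕ) :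
    ∑ κ ∈ Finset.range n, (Fzext M N F ((κ:ℤ) + c + a))ᴴ * Fzext M N F ((κ:ℤ) + c + b)
      = ∑ x ∈ Finset.range (c + n), (Fzext M N F ((x:ℤ) + a))ᴴ * Fzext M N F ((x:ℤ) + b)
        - ∑ x ∈ Finset.range c, (Fzext M N F ((x:ℤ) + a))ᴴ * Fzext M N F ((x:ℤ) + b) := by
  rw [ext_below _ c n, add_sub_cancel_left]
  refine Finset.sum_congr rfl fun κ _ => ?_
  rw [show ((c + κ : ℕ):ℤ) + a = (κ:ℤ) + c + a by push_cast; ring,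
      show ((c + κ : ℕ):ℤ) + b = (κ:ℤ) + c + b by push_cast; ring]

/-- The `U` block (for block indices in `[1,N]`), decomposed over `ℤ`-indices. -/
noncomputable def Ublk (M N : ℕ) (F : ℕ → Matrix (Fin (2*M)) (Fin (2*M)) ℂ) (k j : ℕ) :
    Matrix (Fin (2*M)) (Fin (2*M)) ℂ :=
  (Fzext M N F ((j:ℤ) - k))ᴴ + (Fzext M N F ((j:ℤ) - k + N))ᴴ

/-- The row vector `B D^t` (blocks indexed by `j ∈ [1,N]`). -/
noncomputable def Rrow (M N : ℕ) (F : ℕ → Matrix (Fin (2*M)) (Fin (2*M)) ℂ) (t j : ℕ) :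
    Matrix (Fin (2*M)) (Fin (2*M)) ℂ :=
  (if (j:ℤ) = (t:ℤ) + 1 then 1 else 0)
    - ∑ m ∈ Finset.range (t+1), Fzext M N F m * (Fzext M N F ((j:ℤ) - 1 - t + m))ᴴ

lemma L1
    (hQMF : ∀ ξ : ℂ, ‖ξ‖ = 1 →
      (1 : Matrix (Fin (2*M)) (Fin (2*M)) ℂ) - (Fpoly M N F ξ)ᴴ * Fpoly M N F ξ = 0)
    (s' : ℕ) (hs : s' ≤ N) (j : ℕ) (hj1 : 1 ≤ j) (hj2 : j ≤ N) :
    ∑ κ ∈ Finset.range N, Fzext M N F ((N:ℤ) + s' + 1 - ((κ:ℤ)+1)) * Ublk M N F (κ+1) j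
      = Rrow M N F s' j := by
  rw [← Finset.sum_range_reflect]
  have hterm : ∀ κ ∈ Finset.range N,
      Fzext M N F ((N:ℤ) + s' + 1 - ((↑(N - 1 - κ):ℤ)+1)) * Ublk M N F ((N - 1 - κ)+1) j
        = Fzext M N F ((κ:ℤ) + (s'+1:ℕ) + 0)
            * (Fzext M N F ((κ:ℤ) + (s'+1:ℕ) + ((j:ℤ) - N - s' - 1)))ᴴ
          + Fzext M N F ((κ:ℤ) + (s'+1:ℕ) + 0)
            * (Fzext M N F ((κ:ℤ) + (s'+1:ℕ) + ((j:ℤ) - s' - 1)))ᴴ := by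
    intro κ hκ
    have hκ' : κ < N := Finset.mem_range.mp hκ
    unfold Ublk
    have e1 : (N:ℤ) + ↑s' + 1 - ((↑(N - 1 - κ):ℤ) + 1) = (κ:ℤ) + ↑(s'+1) + 0 := by omega
    have e2 : (j:ℤ) - ↑((N - 1 - κ) + 1) = (κ:ℤ) + ↑(s'+1) + ((j:ℤ) - ↑N - ↑s' - 1) := by omega
    have e3 : (j:ℤ) - ↑((N - 1 - κ) + 1) + ↑N = (κ:ℤ) + ↑(s'+1) + ((j:ℤ) - ↑s' - 1) := by omega
    rw [e1, e3, e2, mul_add]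
  rw [Finset.sum_congr rfl hterm, Finset.sum_add_distrib]
  rw [shiftR M N F 0 ((j:ℤ) - N - s' - 1) (s'+1) N,
      shiftR M N F 0 ((j:ℤ) - s' - 1) (s'+1) N]
  have hfull1 : ∑ x ∈ Finset.range (s' + 1 + N),
      Fzext M N F ((x:ℤ) + 0) * (Fzext M N F ((x:ℤ) + ((j:ℤ) - N - s' - 1)))ᴴ = 0 := by
    rw [KRgen M N F hQMF 0 ((j:ℤ) - N - s' - 1) (s'+1+N) (le_refl 0) (by push_cast; omega)]
    rw [if_neg (by omega)]
  have hlow1 : ∑ x ∈ Finset.range (s' + 1),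
      Fzext M N F ((x:ℤ) + 0) * (Fzext M N F ((x:ℤ) + ((j:ℤ) - N - s' - 1)))ᴴ = 0 := by
    refine Finset.sum_eq_zero fun x hx => ?_
    have := Finset.mem_range.mp hx
    rw [Fzext_neg M N F (i := (x:ℤ) + ((j:ℤ) - N - s' - 1)) (by omega),
      Matrix.conjTranspose_zero, Matrix.mul_zero]
  have hfull2 : ∑ x ∈ Finset.range (s' + 1 + N),
      Fzext M N F ((x:ℤ) + 0) * (Fzext M N F ((x:ℤ) + ((j:ℤ) - s' - 1)))ᴴ
        = if (j:ℤ) = (s':ℤ) + 1 then 1 else 0 := by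
    rw [KRgen M N F hQMF 0 ((j:ℤ) - s' - 1) (s'+1+N) (le_refl 0) (by push_cast; omega)]
    by_cases hj : (j:ℤ) = (s':ℤ) + 1
    · rw [if_pos (by omega), if_pos hj]
    · rw [if_neg (by omega), if_neg hj]
  have hlow2 : ∑ x ∈ Finset.range (s' + 1),
      Fzext M N F ((x:ℤ) + 0) * (Fzext M N F ((x:ℤ) + ((j:ℤ) - s' - 1)))ᴴ
        = ∑ m ∈ Finset.range (s'+1), Fzext M N F m * (Fzext M N F ((j:ℤ) - 1 - s' + m))ᴴ := by
    refine Finset.sum_congr rfl fun x _ => ?_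
    rw [show ((x:ℤ) + 0) = (x:ℤ) by ring, show (x:ℤ) + ((j:ℤ) - s' - 1) = (j:ℤ) - 1 - s' + x by ring]
  rw [hfull1, hlow1, hfull2, hlow2, Rrow]
  abel

lemma L2
    (hQMF : ∀ ξ : ℂ, ‖ξ‖ = 1 →
      (1 : Matrix (Fin (2*M)) (Fin (2*M)) ℂ) - (Fpoly M N F ξ)ᴴ * Fpoly M N F ξ = 0)
    (t : ℕ) (ht : t + 1 ≤ N) (i : ℕ) (hi1 : 1 ≤ i) (hi2 : i ≤ N) :
    ∑ p ∈ Finset.range N, Rrow M N F t (p+1)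
        * (Fzext M N F (((p:ℤ)+1) - i) + Fzext M N F (((p:ℤ)+1) + N + 1 - i))
      = Fzext M N F ((N:ℤ) + t + 2 - i) := by
  -- rewrite each term
  have hterm : ∀ p ∈ Finset.range N,
      Rrow M N F t (p+1) * (Fzext M N F (((p:ℤ)+1) - i) + Fzext M N F (((p:ℤ)+1) + N + 1 - i))
        = (if p = t then (Fzext M N F ((t:ℤ) + 1 - i) + Fzext M N F ((t:ℤ) + N + 2 - i)) else 0)
          - ∑ m ∈ Finset.range (t+1),
              (Fzext M N F m * ((Fzext M N F ((p:ℤ) + ((m:ℤ) - t)))ᴴ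
                  * Fzext M N F ((p:ℤ) + (1 - (i:ℤ))))
               + Fzext M N F m * ((Fzext M N F ((p:ℤ) + ((m:ℤ) - t)))ᴴ
                  * Fzext M N F ((p:ℤ) + ((N:ℤ) + 2 - i)))) := by
    intro p hp
    have hp' : p < N := Finset.mem_range.mp hp
    unfold Rrow
    rw [sub_mul]
    congr 1
    · by_cases hpt : p = t
      · subst hpt
        rw [if_pos (by omega), if_pos rfl, one_mul]
        rw [show ((p:ℤ)+1) - i = (p:ℤ) + 1 - i by ring,
            show ((p:ℤ)+1) + N + 1 - i = (p:ℤ) + N + 2 - i by ring]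
      · rw [if_neg (by omega), if_neg hpt, zero_mul]
    · rw [Finset.sum_mul]
      refine Finset.sum_congr rfl fun m hm => ?_
      have hm' : m < t + 1 := Finset.mem_range.mp hm
      rw [mul_add, mul_assoc, mul_assoc]
      rw [show ((p+1:ℕ):ℤ) - 1 - t + m = (p:ℤ) + ((m:ℤ) - t) by push_cast; ring,
          show ((p:ℤ)+1) - i = (p:ℤ) + (1 - (i:ℤ)) by ring,
          show ((p:ℤ)+1) + N + 1 - i = (p:ℤ) + ((N:ℤ) + 2 - i) by ring]
  rw [Finset.sum_congr rfl hterm, Finset.sum_sub_distrib]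
  -- delta part
  rw [Finset.sum_ite_eq' (Finset.range N) t
    (fun _ => Fzext M N F ((t:ℤ) + 1 - i) + Fzext M N F ((t:ℤ) + N + 2 - i)),
    if_pos (Finset.mem_range.mpr (by omega))]
  -- correction part: swap sums
  rw [Finset.sum_comm]
  -- compute each m-term
  have hmterm : ∀ m ∈ Finset.range (t+1),
      ∑ p ∈ Finset.range N,
        (Fzext M N F m * ((Fzext M N F ((p:ℤ) + ((m:ℤ) - t)))ᴴ
            * Fzext M N F ((p:ℤ) + (1 - (i:ℤ))))
         + Fzext M N F m * ((Fzext M N F ((p:ℤ) + ((m:ℤ) - t)))ᴴ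
            * Fzext M N F ((p:ℤ) + ((N:ℤ) + 2 - i))))
      = Fzext M N F m * ((if ((m:ℤ) - t) = (1 - (i:ℤ)) then 1 else 0)
          - ∑ u ∈ Finset.range (t+1),
              (Fzext M N F ((u:ℤ) + ((N:ℤ) + (m:ℤ) - t)))ᴴ
                * Fzext M N F ((u:ℤ) + ((N:ℤ) + 1 - i))) := by
    intro m hm
    have hm' : m < t + 1 := Finset.mem_range.mp hm
    rw [Finset.sum_add_distrib, ← Finset.mul_sum, ← Finset.mul_sum]
    -- Piece B vanishes
    have hB : ∑ p ∈ Finset.range N,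
        (Fzext M N F ((p:ℤ) + ((m:ℤ) - t)))ᴴ * Fzext M N F ((p:ℤ) + ((N:ℤ) + 2 - i)) = 0 := by
      set c : ℕ := N + 2 - i with hc
      have hc' : (c:ℤ) = (N:ℤ) + 2 - i := by omega
      have hre : ∀ p ∈ Finset.range N,
          (Fzext M N F ((p:ℤ) + ((m:ℤ) - t)))ᴴ * Fzext M N F ((p:ℤ) + ((N:ℤ) + 2 - i))
            = (Fzext M N F ((p:ℤ) + c + ((m:ℤ) - t - c)))ᴴ * Fzext M N F ((p:ℤ) + c + 0) := by
        intro p _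
        rw [show (p:ℤ) + c + ((m:ℤ) - t - c) = (p:ℤ) + ((m:ℤ) - t) by ring,
            show (p:ℤ) + c + 0 = (p:ℤ) + ((N:ℤ) + 2 - i) by omega]
      rw [Finset.sum_congr rfl hre, shiftC M N F ((m:ℤ) - t - c) 0 c N]
      have h1 : ∑ x ∈ Finset.range (c + N),
          (Fzext M N F ((x:ℤ) + ((m:ℤ) - t - c)))ᴴ * Fzext M N F ((x:ℤ) + 0) = 0 := by
        rw [KCgen' M N F hQMF ((m:ℤ) - t - c) 0 (c + N) (le_refl 0) (by push_cast; omega)]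
        rw [if_neg (by omega)]
      have h2 : ∑ x ∈ Finset.range c,
          (Fzext M N F ((x:ℤ) + ((m:ℤ) - t - c)))ᴴ * Fzext M N F ((x:ℤ) + 0) = 0 := by
        refine Finset.sum_eq_zero fun x hx => ?_
        have := Finset.mem_range.mp hx
        rw [Fzext_neg M N F (i := (x:ℤ) + ((m:ℤ) - t - c)) (by omega),
          Matrix.conjTranspose_zero, Matrix.zero_mul]
      rw [h1, h2, sub_zero]
    -- Piece A
    have hA : ∑ p ∈ Finset.range N,
        (Fzext M N F ((p:ℤ) + ((m:ℤ) - t)))ᴴ * Fzext M N F ((p:ℤ) + (1 - (i:ℤ)))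
          = (if ((m:ℤ) - t) = (1 - (i:ℤ)) then 1 else 0)
            - ∑ u ∈ Finset.range (t+1),
                (Fzext M N F ((u:ℤ) + ((N:ℤ) + (m:ℤ) - t)))ᴴ
                  * Fzext M N F ((u:ℤ) + ((N:ℤ) + 1 - i)) := by
      have hsplit := ext_below
        (fun x : ℕ => (Fzext M N F ((x:ℤ) + ((m:ℤ) - t)))ᴴ * Fzext M N F ((x:ℤ) + (1 - (i:ℤ))))
        N (t + 1 - m)
      rw [eq_sub_iff_add_eq, eq_comm]
      have hfull : ∑ x ∈ Finset.range (N + (t + 1 - m)),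
          (Fzext M N F ((x:ℤ) + ((m:ℤ) - t)))ᴴ * Fzext M N F ((x:ℤ) + (1 - (i:ℤ)))
            = if ((m:ℤ) - t) = (1 - (i:ℤ)) then 1 else 0 :=
        KCgen M N F hQMF ((m:ℤ) - t) (1 - (i:ℤ)) (N + (t + 1 - m)) (by omega) (by push_cast; omega)
      rw [← hfull, hsplit]
      congr 1
      -- tails agree after extending the range from t+1-m to t+1
      have hext := ext_below
        (fun u : ℕ => (Fzext M N F ((u:ℤ) + ((N:ℤ) + (m:ℤ) - t)))ᴴ
            * Fzext M N F ((u:ℤ) + ((N:ℤ) + 1 - i)))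
        (t + 1 - m) m
      have hzero : ∑ u ∈ Finset.range m,
          (Fzext M N F (((t + 1 - m + u : ℕ):ℤ) + ((N:ℤ) + (m:ℤ) - t)))ᴴ
            * Fzext M N F (((t + 1 - m + u : ℕ):ℤ) + ((N:ℤ) + 1 - i)) = 0 := by
        refine Finset.sum_eq_zero fun u _ => ?_
        rw [Fzext_big M N F (i := ((t + 1 - m + u : ℕ):ℤ) + ((N:ℤ) + (m:ℤ) - t)) (by omega),
          Matrix.conjTranspose_zero, Matrix.zero_mul]
      have htm : t + 1 - m + m = t + 1 := by omega
      rw [htm] at hext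
      rw [hext, hzero, add_zero]
      refine Finset.sum_congr rfl fun u _ => ?_
      rw [show ((N + u:ℕ):ℤ) + ((m:ℤ) - t) = (u:ℤ) + ((N:ℤ) + (m:ℤ) - t) by push_cast; ring,
          show ((N + u:ℕ):ℤ) + (1 - (i:ℤ)) = (u:ℤ) + ((N:ℤ) + 1 - i) by push_cast; ring]
    rw [hA, hB, mul_zero, add_zero]
  rw [Finset.sum_congr rfl hmterm]
  -- expand: ∑_m Fz m * (ite - Tail) = ∑_m Fz m * ite - ∑_m Fz m * Tail
  have hsplit2 : ∀ m ∈ Finset.range (t+1),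
      Fzext M N F m * ((if ((m:ℤ) - t) = (1 - (i:ℤ)) then 1 else 0)
          - ∑ u ∈ Finset.range (t+1),
              (Fzext M N F ((u:ℤ) + ((N:ℤ) + (m:ℤ) - t)))ᴴ
                * Fzext M N F ((u:ℤ) + ((N:ℤ) + 1 - i)))
        = (if (m:ℤ) = (t:ℤ) + 1 - i then Fzext M N F m else 0)
          - ∑ u ∈ Finset.range (t+1),
              Fzext M N F m * ((Fzext M N F ((u:ℤ) + ((N:ℤ) + (m:ℤ) - t)))ᴴ
                * Fzext M N F ((u:ℤ) + ((N:ℤ) + 1 - i))) := by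
    intro m hm
    rw [mul_sub, Finset.mul_sum, mul_ite, mul_one, mul_zero]
    congr 1
    by_cases hc : (m:ℤ) = (t:ℤ) + 1 - i
    · rw [if_pos (by omega), if_pos hc]
    · rw [if_neg (by omega), if_neg hc]
  rw [Finset.sum_congr rfl hsplit2, Finset.sum_sub_distrib]
  -- first piece: single hit
  have hhit : ∑ m ∈ Finset.range (t+1),
      (if (m:ℤ) = (t:ℤ) + 1 - i then Fzext M N F m else 0) = Fzext M N F ((t:ℤ) + 1 - i) := by
    by_cases hit : i ≤ t + 1
    · rw [Finset.sum_eq_single_of_mem (t + 1 - i) (Finset.mem_range.mpr (by omega))]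
      · rw [if_pos (by omega),
          show ((t + 1 - i : ℕ) : ℤ) = (t:ℤ) + 1 - i from by omega]
      · intro m hm hne
        rw [if_neg (by omega)]
    · rw [Fzext_neg M N F (i := (t:ℤ) + 1 - i) (by omega)]
      refine Finset.sum_eq_zero fun m hm => ?_
      have := Finset.mem_range.mp hm
      rw [if_neg (by omega)]
  rw [hhit]
  -- second piece is zero
  have hzero2 : ∑ m ∈ Finset.range (t+1), ∑ u ∈ Finset.range (t+1),
      Fzext M N F m * ((Fzext M N F ((u:ℤ) + ((N:ℤ) + (m:ℤ) - t)))ᴴ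
        * Fzext M N F ((u:ℤ) + ((N:ℤ) + 1 - i))) = 0 := by
    rw [Finset.sum_comm]
    refine Finset.sum_eq_zero fun u hu => ?_
    have hu' : u < t + 1 := Finset.mem_range.mp hu
    have hfact : ∀ m ∈ Finset.range (t+1),
        Fzext M N F m * ((Fzext M N F ((u:ℤ) + ((N:ℤ) + (m:ℤ) - t)))ᴴ
          * Fzext M N F ((u:ℤ) + ((N:ℤ) + 1 - i)))
        = (Fzext M N F m * (Fzext M N F ((m:ℤ) + ((N:ℤ) + (u:ℤ) - t)))ᴴ)
            * Fzext M N F ((u:ℤ) + ((N:ℤ) + 1 - i)) := by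
      intro m _
      rw [← mul_assoc,
        show ((u:ℤ) + ((N:ℤ) + (m:ℤ) - t)) = (m:ℤ) + ((N:ℤ) + (u:ℤ) - t) by ring]
    rw [Finset.sum_congr rfl hfact, ← Finset.sum_mul]
    have hKR : ∑ m ∈ Finset.range (t+1),
        Fzext M N F m * (Fzext M N F ((m:ℤ) + ((N:ℤ) + (u:ℤ) - t)))ᴴ = 0 := by
      have hext := ext_below
        (fun m : ℕ => Fzext M N F m * (Fzext M N F ((m:ℤ) + ((N:ℤ) + (u:ℤ) - t)))ᴴ)
        (t+1) (N - t)
      have htN : t + 1 + (N - t) = N + 1 := by omega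
      rw [htN] at hext
      have hz : ∑ κ ∈ Finset.range (N - t),
          Fzext M N F ((t + 1 + κ : ℕ):ℤ)
            * (Fzext M N F (((t + 1 + κ : ℕ):ℤ) + ((N:ℤ) + (u:ℤ) - t)))ᴴ = 0 := by
        refine Finset.sum_eq_zero fun κ _ => ?_
        rw [Fzext_big M N F (i := ((t + 1 + κ : ℕ):ℤ) + ((N:ℤ) + (u:ℤ) - t)) (by omega),
          Matrix.conjTranspose_zero, Matrix.mul_zero]
      have hfull := KRbase M N F hQMF ((N:ℤ) + (u:ℤ) - t)
      rw [if_neg (by omega)] at hfull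
      have := hext
      rw [hfull, hz, add_zero] at this
      -- this : 0 = ∑_{m<t+1} ...
      exact this.symm
    rw [hKR, Matrix.zero_mul]
  rw [hzero2, sub_zero]
  -- conclude
  rw [show (t:ℤ) + N + 2 - i = (N:ℤ) + t + 2 - i by ring]
  abel

lemma Ediag_succ (k q : Fin N) (w s : Fin (2*M)) :
    Ediag M N F (k.succ, w) (q.succ, s) = Ublk M N F (k.1+1) (q.1+1) w s := by
  have hk : k.1 < N := k.isLt
  have hq : q.1 < N := q.isLt
  have hne1 : (k.succ : Fin (N+1)).1 ≠ 0 := by simp [Fin.val_succ]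
  have hne2 : (q.succ : Fin (N+1)).1 ≠ 0 := by simp [Fin.val_succ]
  unfold Ediag
  rw [if_neg hne1, if_neg hne2]
  have harg : ((q.succ : Fin (N+1)).1 + N - (k.succ : Fin (N+1)).1) = q.1 + N - k.1 := by
    simp [Fin.val_succ]; omega
  rw [harg]
  have hmat : (if (q.1 + N - k.1) % N = 0 then (F 0 + F N)ᴴ
      else (F ((q.1 + N - k.1) % N))ᴴ) = Ublk M N F (k.1+1) (q.1+1) := by
    unfold Ublk
    rcases lt_trichotomy k.1 q.1 with hlt | heq | hgt
    · have h1 : q.1 + N - k.1 = (q.1 - k.1) + N := by omega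
      have h2 : ((q.1 - k.1) + N) % N = q.1 - k.1 := by
        rw [Nat.add_mod_right]
        exact Nat.mod_eq_of_lt (by omega)
      rw [h1, h2, if_neg (by omega)]
      rw [Fzext_big M N F (i := ((q.1+1:ℕ):ℤ) - ((k.1+1:ℕ):ℤ) + N) (by push_cast; omega)]
      rw [Matrix.conjTranspose_zero, add_zero]
      rw [show ((q.1+1:ℕ):ℤ) - ((k.1+1:ℕ):ℤ) = ((q.1 - k.1 : ℕ):ℤ) by push_cast; omega]
      rw [Fzext_nat M N F (k := q.1 - k.1) (by omega)]
    · have h1 : q.1 + N - k.1 = N := by omega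
      rw [h1, Nat.mod_self, if_pos rfl]
      rw [show ((q.1+1:ℕ):ℤ) - ((k.1+1:ℕ):ℤ) = ((0:ℕ):ℤ) by push_cast; omega]
      rw [Fzext_nat M N F (k := 0) (by omega)]
      rw [show ((0:ℕ):ℤ) + (N:ℤ) = ((N:ℕ):ℤ) by push_cast; ring]
      rw [Fzext_nat M N F (k := N) (le_refl N)]
      rw [Matrix.conjTranspose_add]
    · have h1 : (q.1 + N - k.1) % N = q.1 + N - k.1 := Nat.mod_eq_of_lt (by omega)
      rw [h1, if_neg (by omega)]
      rw [Fzext_neg M N F (i := ((q.1+1:ℕ):ℤ) - ((k.1+1:ℕ):ℤ)) (by push_cast; omega)]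
      rw [Matrix.conjTranspose_zero, zero_add]
      rw [show ((q.1+1:ℕ):ℤ) - ((k.1+1:ℕ):ℤ) + N = ((q.1 + N - k.1 : ℕ):ℤ) by push_cast; omega]
      rw [Fzext_nat M N F (k := q.1 + N - k.1) (by omega)]
  rw [hmat]

lemma ABCD_col (p : Fin (N+1)) (r : Fin (2*M)) (qq : Fin N) (s : Fin (2*M)) :
    ABCDmat M N F (p, r) (qq.succ, s)
      = ∑ κ ∈ Finset.range N,
          (F ((p.1 + (N+1) - (κ+1)) % (N+1)) * Ublk M N F (κ+1) (qq.1+1)) r s := by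
  unfold ABCDmat
  rw [Matrix.mul_apply, Fintype.sum_prod_type, Fin.sum_univ_succ]
  have hzero : ∑ w : Fin (2*M), Tcirc M N F (p, r) ((0 : Fin (N+1)), w)
      * Ediag M N F ((0 : Fin (N+1)), w) (qq.succ, s) = 0 := by
    refine Finset.sum_eq_zero fun w _ => ?_
    have : Ediag M N F ((0 : Fin (N+1)), w) (qq.succ, s) = 0 := by
      simp [Ediag, Fin.val_succ]
    rw [this, mul_zero]
  rw [hzero, zero_add]
  rw [← Fin.sum_univ_eq_sum_range (fun κ =>
    (F ((p.1 + (N+1) - (κ+1)) % (N+1)) * Ublk M N F (κ+1) (qq.1+1)) r s) N]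
  refine Finset.sum_congr rfl fun κ _ => ?_
  rw [Matrix.mul_apply]
  refine Finset.sum_congr rfl fun w _ => ?_
  rw [Ediag_succ M N F κ qq w s]
  rfl

lemma Tdec (p κ : ℕ) (hp : p < N) (hκ : κ < N) :
    F ((p+1 + (N+1) - (κ+1)) % (N+1))
      = Fzext M N F (((p:ℤ)+1) - ((κ+1:ℕ):ℤ)) + Fzext M N F (((p:ℤ)+1) + N + 1 - ((κ+1:ℕ):ℤ)) := by
  rcases le_or_gt κ p with hle | hgt
  · have h1 : p+1 + (N+1) - (κ+1) = (p - κ) + (N+1) := by omega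
    have h2 : ((p - κ) + (N+1)) % (N+1) = p - κ := by
      rw [Nat.add_mod_right]
      exact Nat.mod_eq_of_lt (by omega)
    rw [h1, h2]
    rw [show ((p:ℤ)+1) - ((κ+1:ℕ):ℤ) = ((p - κ : ℕ):ℤ) by push_cast; omega]
    rw [Fzext_nat M N F (k := p - κ) (by omega)]
    rw [Fzext_big M N F (i := ((p:ℤ)+1) + N + 1 - ((κ+1:ℕ):ℤ)) (by push_cast; omega)]
    rw [add_zero]
  · have h1 : (p+1 + (N+1) - (κ+1)) % (N+1) = p+1 + (N+1) - (κ+1) :=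
      Nat.mod_eq_of_lt (by omega)
    rw [h1]
    rw [Fzext_neg M N F (i := ((p:ℤ)+1) - ((κ+1:ℕ):ℤ)) (by push_cast; omega), zero_add]
    rw [show ((p:ℤ)+1) + N + 1 - ((κ+1:ℕ):ℤ) = ((p+1 + (N+1) - (κ+1) : ℕ):ℤ) by push_cast; omega]
    rw [Fzext_nat M N F (k := p+1 + (N+1) - (κ+1)) (by omega)]

/-- The row of blocks `B D^t` as a matrix. -/
noncomputable def RrowM (M N : ℕ) (F : ℕ → Matrix (Fin (2*M)) (Fin (2*M)) ℂ) (t : ℕ) :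
    Matrix (Fin (2*M)) (Fin N × Fin (2*M)) ℂ :=
  fun r q => Rrow M N F t (q.1.1+1) r q.2

lemma Bmat_base
    (hQMF : ∀ ξ : ℂ, ‖ξ‖ = 1 →
      (1 : Matrix (Fin (2*M)) (Fin (2*M)) ℂ) - (Fpoly M N F ξ)ᴴ * Fpoly M N F ξ = 0) :
    Bmat M N F = RrowM M N F 0 := by
  funext r q
  show ABCDmat M N F ((0 : Fin (N+1)), r) (q.1.succ, q.2) = _
  rw [ABCD_col M N F (0 : Fin (N+1)) r q.1 q.2]
  have hq : q.1.1 < N := q.1.isLt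
  have hterm : ∀ κ ∈ Finset.range N,
      (F (((0 : Fin (N+1)).1 + (N+1) - (κ+1)) % (N+1)) * Ublk M N F (κ+1) (q.1.1+1)) r q.2
        = (Fzext M N F ((N:ℤ) + (0:ℕ) + 1 - ((κ:ℤ)+1)) * Ublk M N F (κ+1) (q.1.1+1)) r q.2 := by
    intro κ hκ
    have hκ' : κ < N := Finset.mem_range.mp hκ
    have h1 : ((0 : Fin (N+1)).1 + (N+1) - (κ+1)) % (N+1) = N - κ := by
      have : (0 : Fin (N+1)).1 = 0 := rfl
      rw [this]
      have h2 : 0 + (N+1) - (κ+1) = N - κ := by omega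
      rw [h2]
      exact Nat.mod_eq_of_lt (by omega)
    rw [h1]
    rw [show (N:ℤ) + ((0:ℕ):ℤ) + 1 - ((κ:ℤ)+1) = ((N - κ : ℕ):ℤ) by push_cast; omega]
    rw [Fzext_nat M N F (k := N - κ) (by omega)]
  rw [Finset.sum_congr rfl hterm]
  have hsum : ∑ κ ∈ Finset.range N,
      (Fzext M N F ((N:ℤ) + (0:ℕ) + 1 - ((κ:ℤ)+1)) * Ublk M N F (κ+1) (q.1.1+1)) r q.2
      = (∑ κ ∈ Finset.range N,
          Fzext M N F ((N:ℤ) + (0:ℕ) + 1 - ((κ:ℤ)+1)) * Ublk M N F (κ+1) (q.1.1+1)) r q.2 := by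
    rw [Matrix.sum_apply]
  rw [hsum, L1 M N F hQMF 0 (by omega) (q.1.1+1) (by omega) (by omega)]
  rfl

lemma step_mul
    (hQMF : ∀ ξ : ℂ, ‖ξ‖ = 1 →
      (1 : Matrix (Fin (2*M)) (Fin (2*M)) ℂ) - (Fpoly M N F ξ)ᴴ * Fpoly M N F ξ = 0)
    (t : ℕ) (ht : t + 1 ≤ N) :
    RrowM M N F t * Dmat M N F = RrowM M N F (t+1) := by
  funext r q
  rw [Matrix.mul_apply, Fintype.sum_prod_type]
  have hq : q.1.1 < N := q.1.isLt
  have hD : ∀ (p : Fin N) (w : Fin (2*M)),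
      Dmat M N F (p, w) q = ∑ κ ∈ Finset.range N,
        (F ((p.1+1 + (N+1) - (κ+1)) % (N+1)) * Ublk M N F (κ+1) (q.1.1+1)) w q.2 := by
    intro p w
    show ABCDmat M N F (p.succ, w) (q.1.succ, q.2) = _
    rw [ABCD_col M N F p.succ w q.1 q.2]
    refine Finset.sum_congr rfl fun κ _ => ?_
    rw [Fin.val_succ]
  have hstep1 : ∀ p : Fin N,
      ∑ w, RrowM M N F t r (p, w) * Dmat M N F (p, w) q
        = ∑ κ ∈ Finset.range N,
            ((Rrow M N F t (p.1+1) * (F ((p.1+1 + (N+1) - (κ+1)) % (N+1))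
              * Ublk M N F (κ+1) (q.1.1+1)))) r q.2 := by
    intro p
    have : ∀ w, RrowM M N F t r (p, w) * Dmat M N F (p, w) q
        = ∑ κ ∈ Finset.range N, Rrow M N F t (p.1+1) r w
            * (F ((p.1+1 + (N+1) - (κ+1)) % (N+1)) * Ublk M N F (κ+1) (q.1.1+1)) w q.2 := by
      intro w
      rw [hD p w, Finset.mul_sum]
      rfl
    rw [Finset.sum_congr rfl (fun w _ => this w), Finset.sum_comm]
    refine Finset.sum_congr rfl fun κ _ => ?_
    rw [Matrix.mul_apply]
  rw [Finset.sum_congr rfl (fun p _ => hstep1 p), Finset.sum_comm]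
  have hstep2 : ∀ κ ∈ Finset.range N,
      ∑ p : Fin N, (Rrow M N F t (p.1+1) * (F ((p.1+1 + (N+1) - (κ+1)) % (N+1))
          * Ublk M N F (κ+1) (q.1.1+1))) r q.2
        = (Fzext M N F ((N:ℤ) + (t+1:ℕ) + 1 - ((κ:ℤ)+1)) * Ublk M N F (κ+1) (q.1.1+1)) r q.2 := by
    intro κ hκ
    have hκ' : κ < N := Finset.mem_range.mp hκ
    have hre : ∀ p : Fin N, (Rrow M N F t (p.1+1) * (F ((p.1+1 + (N+1) - (κ+1)) % (N+1))
          * Ublk M N F (κ+1) (q.1.1+1))) r q.2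
        = ((Rrow M N F t (p.1+1) * (Fzext M N F (((p.1:ℤ)+1) - ((κ+1:ℕ):ℤ))
            + Fzext M N F (((p.1:ℤ)+1) + N + 1 - ((κ+1:ℕ):ℤ))))
              * Ublk M N F (κ+1) (q.1.1+1)) r q.2 := by
      intro p
      rw [Tdec M N F p.1 κ p.isLt hκ', ← mul_assoc]
    rw [Finset.sum_congr rfl (fun p _ => hre p)]
    rw [← Matrix.sum_apply]
    rw [← Finset.sum_mul]
    rw [Fin.sum_univ_eq_sum_range (fun p =>
      Rrow M N F t (p+1) * (Fzext M N F (((p:ℤ)+1) - ((κ+1:ℕ):ℤ))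
        + Fzext M N F (((p:ℤ)+1) + N + 1 - ((κ+1:ℕ):ℤ)))) N]
    rw [L2 M N F hQMF t ht (κ+1) (by omega) (by omega)]
    rw [show (N:ℤ) + ((t:ℤ)) + 2 - ((κ+1:ℕ):ℤ) = (N:ℤ) + ((t+1:ℕ):ℤ) + 1 - ((κ:ℤ)+1)
      by push_cast; ring]
  rw [Finset.sum_congr rfl hstep2]
  have hsum : ∑ κ ∈ Finset.range N,
      (Fzext M N F ((N:ℤ) + (t+1:ℕ) + 1 - ((κ:ℤ)+1)) * Ublk M N F (κ+1) (q.1.1+1)) r q.2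
      = (∑ κ ∈ Finset.range N,
          Fzext M N F ((N:ℤ) + (t+1:ℕ) + 1 - ((κ:ℤ)+1)) * Ublk M N F (κ+1) (q.1.1+1)) r q.2 := by
    rw [Matrix.sum_apply]
  rw [hsum, L1 M N F hQMF (t+1) (by omega) (q.1.1+1) (by omega) (by omega)]
  rfl

lemma RrowN_zero
    (hQMF : ∀ ξ : ℂ, ‖ξ‖ = 1 →
      (1 : Matrix (Fin (2*M)) (Fin (2*M)) ℂ) - (Fpoly M N F ξ)ᴴ * Fpoly M N F ξ = 0)
    (j : ℕ) (hj1 : 1 ≤ j) (hj2 : j ≤ N) : Rrow M N F N j = 0 := by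
  unfold Rrow
  rw [if_neg (by omega)]
  have hterm : ∀ m ∈ Finset.range (N+1),
      Fzext M N F m * (Fzext M N F ((j:ℤ) - 1 - N + m))ᴴ
        = Fzext M N F m * (Fzext M N F ((m:ℤ) + ((j:ℤ) - 1 - N)))ᴴ := by
    intro m _
    rw [show (j:ℤ) - 1 - N + m = (m:ℤ) + ((j:ℤ) - 1 - N) by ring]
  rw [Finset.sum_congr rfl hterm, KRbase M N F hQMF ((j:ℤ) - 1 - N), if_neg (by omega)]
  rw [sub_zero]

end AuxStmt6

theorem stmt6 (M N : ℕ) (F : ℕ → Matrix (Fin (2*M)) (Fin (2*M)) ℂ)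
    (hQMF : ∀ ξ : ℂ, ‖ξ‖ = 1 →
      (1 : Matrix (Fin (2*M)) (Fin (2*M)) ℂ) - (Fpoly M N F ξ)ᴴ * Fpoly M N F ξ = 0) :
    Bmat M N F * (Dmat M N F)^N = 0 := by
  rcases Nat.eq_zero_or_pos N with hN | hN
  · subst hN
    funext r q
    exact q.1.elim0
  · have hpow : ∀ t, t ≤ N → Bmat M N F * (Dmat M N F)^t = RrowM M N F t := by
      intro t
      induction t with
      | zero => intro _; rw [pow_zero, Matrix.mul_one, Bmat_base M N F hQMF]
      | succ t ih =>
        intro ht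
        rw [pow_succ, ← Matrix.mul_assoc, ih (by omega), step_mul M N F hQMF t ht]
    rw [hpow N le_rfl]
    funext r q
    have hqlt : q.1.1 < N := q.1.isLt
    show Rrow M N F N (q.1.1+1) r q.2 = 0
    rw [RrowN_zero M N F hQMF (q.1.1+1) (by omega) (by omega)]
    rfl
end

section
/- Suppose A, B, C, D ∈ ℂ^{n×n} satisfy: (A B; C D) is unitary, DC = 0, BC = C, B = CU, D = AU with U = A* + C*. Then U is unitary, B is an orthogonal projection (B² = B, B* = B), and D = I − B. -/
open Matrix

theorem stmt9 (n : ℕ) (A B C D U : Matrix (Fin n) (Fin n) ℂ)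
    (hU : U = Aᴴ + Cᴴ)
    (h1 : (fromBlocks A B C D)ᴴ * fromBlocks A B C D = 1)
    (h2 : fromBlocks A B C D * (fromBlocks A B C D)ᴴ = 1)
    (h3 : D * C = 0) (h4 : B * C = C) (h5 : B = C * U) (h6 : D = A * U) :
    (Uᴴ * U = 1 ∧ U * Uᴴ = 1) ∧ (B * B = B ∧ Bᴴ = B) ∧ D = 1 - B := by
  have key : fromBlocks (Aᴴ*A + Cᴴ*C) (Aᴴ*B + Cᴴ*D) (Bᴴ*A + Dᴴ*C) (Bᴴ*B + Dᴴ*D)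
      = fromBlocks (1 : Matrix (Fin n) (Fin n) ℂ) 0 0 1 := by
    rw [← Matrix.fromBlocks_multiply, ← Matrix.fromBlocks_conjTranspose, h1,
      Matrix.fromBlocks_one]
  obtain ⟨E1, E3, -, E2⟩ := Matrix.fromBlocks_inj.mp key
  -- U is unitary
  have hUU : Uᴴ * U = 1 := by
    have hcalc : Uᴴ * U = Bᴴ*B + Dᴴ*D := by
      rw [h5, h6, Matrix.conjTranspose_mul, Matrix.conjTranspose_mul]
      calc Uᴴ * U = Uᴴ * (Aᴴ*A + Cᴴ*C) * U := by rw [E1, Matrix.mul_one]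
        _ = Uᴴ * Cᴴ * (C * U) + Uᴴ * Aᴴ * (A * U) := by
            rw [Matrix.mul_add, Matrix.add_mul]
            simp [Matrix.mul_assoc]
            exact add_comm _ _
    rw [hcalc, E2]
  have hUU' : U * Uᴴ = 1 := mul_eq_one_comm.mp hUU
  -- B + D = 1
  have hBD : B + D = 1 := by
    have hCA : C + A = Uᴴ := by
      rw [hU, Matrix.conjTranspose_add, Matrix.conjTranspose_conjTranspose,
        Matrix.conjTranspose_conjTranspose, add_comm]
    rw [h5, h6, ← Matrix.add_mul, hCA, hUU]
  have hD : D = 1 - B := by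
    rw [← hBD]; abel
  -- B is idempotent
  have hB2 : B * B = B := by
    calc B * B = B * (C * U) := by rw [← h5]
      _ = (B * C) * U := by rw [Matrix.mul_assoc]
      _ = C * U := by rw [h4]
      _ = B := h5.symm
  -- Aᴴ = U * Dᴴ, Cᴴ = U * Bᴴ
  have hA : Aᴴ = U * Dᴴ := by
    rw [h6, Matrix.conjTranspose_mul, ← Matrix.mul_assoc, hUU', Matrix.one_mul]
  have hC : Cᴴ = U * Bᴴ := by
    rw [h5, Matrix.conjTranspose_mul, ← Matrix.mul_assoc, hUU', Matrix.one_mul]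
  have hXB : Dᴴ*B + Bᴴ*D = 0 := by
    have h0 : U * (Dᴴ*B + Bᴴ*D) = 0 := by
      rw [Matrix.mul_add, ← Matrix.mul_assoc, ← Matrix.mul_assoc, ← hA, ← hC, E3]
    calc Dᴴ*B + Bᴴ*D = Uᴴ * (U * (Dᴴ*B + Bᴴ*D)) := by
          rw [← Matrix.mul_assoc, hUU, Matrix.one_mul]
      _ = 0 := by rw [h0, Matrix.mul_zero]
  -- B = Bᴴ * B
  have hBHB : B = Bᴴ * B := by
    have h7 : Dᴴ*B + Bᴴ*D = B - Bᴴ*B + (Bᴴ - Bᴴ*B) := by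
      rw [hD]
      simp [Matrix.sub_mul, Matrix.mul_sub, Matrix.conjTranspose_sub]
    have h8 : B - Bᴴ*B + (Bᴴ - Bᴴ*B) = 0 := by rw [← h7, hXB]
    have h9 : (B - Bᴴ*B + (Bᴴ - Bᴴ*B)) * B = 0 := by rw [h8, Matrix.zero_mul]
    have h10 : B - Bᴴ*B = 0 := by
      have : (B - Bᴴ*B + (Bᴴ - Bᴴ*B)) * B
          = B - Bᴴ*B := by
        rw [Matrix.add_mul, Matrix.sub_mul, Matrix.sub_mul, Matrix.mul_assoc, hB2]
        abel
      rw [this] at h9; exact h9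
    exact (sub_eq_zero.mp h10)
  have hBH : Bᴴ = B := by
    calc Bᴴ = (Bᴴ * B)ᴴ := by rw [← hBHB]
      _ = Bᴴ * B := by rw [Matrix.conjTranspose_mul, Matrix.conjTranspose_conjTranspose]
      _ = B := hBHB.symm
  exact ⟨⟨hUU, hUU'⟩, ⟨hB2, hBH⟩, hD⟩
end
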